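/- arXiv:2510.05393 — 3 statements merged into one kernel-verified Lean document; each statement's English description precedes it below -/
import Mathlib

section
/- Let ρ be a mixed state on an n-qubit system partitioned into m subsystems of local dimensions d₁,…,d_m with ∏ᵢ dᵢ = 2ⁿ. The product test, which performs a swap test on each of the m pairs of corresponding subsystems of two copies of ρ and accepts iff all swap tests succeed, accepts with probability exactly (1/2^m) · Σ_{S⊆[m]} Tr[ρ_S²], where ρ_S is the reduced state of ρ on the subsystems indexed by S. -/
open Matrix
open scoped ComplexOrder Kronecker

/-- A density matrix: positive semidefinite with unit trace. -/
def IsDensityMatrix {n : Type*} [Fintype n] (ρ : Matrix n n ℂ) : Prop :=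
  ρ.PosSemidef ∧ ρ.trace = 1

/-- The reduced state `ρ_S` of a state `ρ` on `⨂ i, ℂ^{d i}`, obtained by tracing out the
subsystems outside `S`. -/
noncomputable def reducedState {m : ℕ} {d : Fin m → ℕ}
    (ρ : Matrix (∀ i, Fin (d i)) (∀ i, Fin (d i)) ℂ) (S : Finset (Fin m)) :
    Matrix (∀ i : {i // i ∈ S}, Fin (d i)) (∀ i : {i // i ∈ S}, Fin (d i)) ℂ :=
  fun a b => ∑ c : ∀ i : {i // i ∈ Sᶜ}, Fin (d i),
    ρ (fun i => if h : i ∈ S then a ⟨i, h⟩ else c ⟨i, Finset.mem_compl.mpr h⟩)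
      (fun i => if h : i ∈ S then b ⟨i, h⟩ else c ⟨i, Finset.mem_compl.mpr h⟩)

/-- The measurement operator of the product test acting on two copies: on each subsystem `i`
it applies the projector `(I + SWAPᵢ)/2` onto the symmetric subspace of the pair of
corresponding subsystems of the two copies; the test accepts iff all `m` swap tests succeed. -/
noncomputable def productTestOp {m : ℕ} (d : Fin m → ℕ) :
    Matrix ((∀ i, Fin (d i)) × (∀ i, Fin (d i))) ((∀ i, Fin (d i)) × (∀ i, Fin (d i))) ℂ :=
  fun p q => ∏ i,
    (((if p.1 i = q.1 i ∧ p.2 i = q.2 i then 1 else 0) +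
      (if p.1 i = q.2 i ∧ p.2 i = q.1 i then 1 else 0)) / 2)

/-- Mix two full configurations: take `x` on `S` and `y` off `S`. -/
def mixF {m : ℕ} {d : Fin m → ℕ} (S : Finset (Fin m))
    (x y : ∀ i, Fin (d i)) : ∀ i, Fin (d i) := fun i => if i ∈ S then x i else y i

/-- Glue a configuration on `S` with one on `Sᶜ`. -/
def glueF {m : ℕ} {d : Fin m → ℕ} (S : Finset (Fin m))
    (a : ∀ i : {i // i ∈ S}, Fin (d i)) (c : ∀ i : {i // i ∈ Sᶜ}, Fin (d i)) :
    ∀ i, Fin (d i) :=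
  fun i => if h : i ∈ S then a ⟨i, h⟩ else c ⟨i, Finset.mem_compl.mpr h⟩

/-- Splitting a pair of full configurations into restricted pieces. -/
def splitEquiv {m : ℕ} {d : Fin m → ℕ} (S : Finset (Fin m)) :
    ((∀ i : {i // i ∈ S}, Fin (d i)) × (∀ i : {i // i ∈ S}, Fin (d i))
      × (∀ i : {i // i ∈ Sᶜ}, Fin (d i)) × (∀ i : {i // i ∈ Sᶜ}, Fin (d i)))
    ≃ ((∀ i, Fin (d i)) × (∀ i, Fin (d i))) where
  toFun x := (glueF S x.2.1 x.2.2.1, glueF S x.1 x.2.2.2)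
  invFun p := (fun i => p.2 i.1, fun i => p.1 i.1, fun i => p.1 i.1, fun i => p.2 i.1)
  left_inv := by
    rintro ⟨a, b, c, c'⟩
    refine Prod.ext ?_ (Prod.ext ?_ (Prod.ext ?_ ?_)) <;> funext i
    · simp [glueF, i.2]
    · simp [glueF, i.2]
    · simp [glueF, Finset.mem_compl.mp i.2]
    · simp [glueF, Finset.mem_compl.mp i.2]
  right_inv := by
    rintro ⟨p1, p2⟩
    refine Prod.ext ?_ ?_ <;> funext i <;> by_cases h : i ∈ S <;> simp [glueF, h]

lemma trace_sq_reduced {m : ℕ} {d : Fin m → ℕ}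
    (ρ : Matrix (∀ i, Fin (d i)) (∀ i, Fin (d i)) ℂ) (S : Finset (Fin m)) :
    (reducedState ρ S * reducedState ρ S).trace
      = ∑ p : (∀ i, Fin (d i)) × (∀ i, Fin (d i)),
          ρ (mixF S p.2 p.1) p.1 * ρ (mixF S p.1 p.2) p.2 := by
  classical
  have hred : ∀ a b, reducedState ρ S a b = ∑ c, ρ (glueF S a c) (glueF S b c) :=
    fun _ _ => rfl
  have h1 : (∑ p : (∀ i, Fin (d i)) × (∀ i, Fin (d i)),
      ρ (mixF S p.2 p.1) p.1 * ρ (mixF S p.1 p.2) p.2)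
    = ∑ x : ((∀ i : {i // i ∈ S}, Fin (d i)) × (∀ i : {i // i ∈ S}, Fin (d i))
        × (∀ i : {i // i ∈ Sᶜ}, Fin (d i)) × (∀ i : {i // i ∈ Sᶜ}, Fin (d i))),
        ρ (glueF S x.1 x.2.2.1) (glueF S x.2.1 x.2.2.1)
          * ρ (glueF S x.2.1 x.2.2.2) (glueF S x.1 x.2.2.2) := by
    rw [← (splitEquiv S).sum_comp
      (fun p : (∀ i, Fin (d i)) × (∀ i, Fin (d i)) =>
        ρ (mixF S p.2 p.1) p.1 * ρ (mixF S p.1 p.2) p.2)]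
    refine Finset.sum_congr rfl ?_
    rintro ⟨a, b, c, c'⟩ -
    have e1 : mixF S (glueF S a c') (glueF S b c) = glueF S a c := by
      funext i; by_cases h : i ∈ S <;> simp [mixF, glueF, h]
    have e2 : mixF S (glueF S b c) (glueF S a c') = glueF S b c' := by
      funext i; by_cases h : i ∈ S <;> simp [mixF, glueF, h]
    simp only [splitEquiv, Equiv.coe_fn_mk, e1, e2]
  rw [h1]
  simp only [Matrix.trace, Matrix.diag, Matrix.mul_apply, hred]
  rw [Fintype.sum_prod_type]
  refine Finset.sum_congr rfl fun a _ => ?_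
  rw [Fintype.sum_prod_type]
  refine Finset.sum_congr rfl fun b _ => ?_
  rw [Fintype.sum_prod_type, Finset.sum_mul_sum]

/-- Product test for mixed states: on an `n`-qubit system partitioned into `m` subsystems of
local dimensions `d₁,…,d_m` with `∏ᵢ dᵢ = 2ⁿ`, the product test applied to two copies of `ρ`
accepts with probability exactly `(1/2^m) · Σ_{S⊆[m]} Tr[ρ_S²]`. -/
theorem stmt_6 (n m : ℕ) (d : Fin m → ℕ) (hd : ∏ i, d i = 2 ^ n)
    (ρ : Matrix (∀ i, Fin (d i)) (∀ i, Fin (d i)) ℂ) (hρ : IsDensityMatrix ρ) :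
    (productTestOp d * (ρ ⊗ₖ ρ)).trace =
      (1 / 2 ^ m) * ∑ S : Finset (Fin m), (reducedState ρ S * reducedState ρ S).trace := by
  classical
  have hP : ∀ p q : (∀ i, Fin (d i)) × (∀ i, Fin (d i)),
      productTestOp d p q
        = (1 / 2 ^ m : ℂ) * ∑ S ∈ (Finset.univ : Finset (Fin m)).powerset,
            (∏ i ∈ S, (if p.1 i = q.2 i ∧ p.2 i = q.1 i then (1:ℂ) else 0)) *
            ∏ i ∈ Finset.univ \ S, (if p.1 i = q.1 i ∧ p.2 i = q.2 i then (1:ℂ) else 0) := by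
    intro p q
    show (∏ i, (((if p.1 i = q.1 i ∧ p.2 i = q.2 i then (1:ℂ) else 0) +
      (if p.1 i = q.2 i ∧ p.2 i = q.1 i then 1 else 0)) / 2)) = _
    rw [Finset.prod_div_distrib, Finset.prod_const, Finset.card_univ, Fintype.card_fin]
    rw [show (∏ i, ((if p.1 i = q.1 i ∧ p.2 i = q.2 i then (1:ℂ) else 0) +
        (if p.1 i = q.2 i ∧ p.2 i = q.1 i then 1 else 0)))
      = ∏ i, ((if p.1 i = q.2 i ∧ p.2 i = q.1 i then (1:ℂ) else 0) +
        (if p.1 i = q.1 i ∧ p.2 i = q.2 i then 1 else 0)) from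
      Finset.prod_congr rfl fun i _ => add_comm _ _]
    rw [Finset.prod_add]
    ring
  have hind : ∀ (S : Finset (Fin m)) (p q : (∀ i, Fin (d i)) × (∀ i, Fin (d i))),
      ((∏ i ∈ S, (if p.1 i = q.2 i ∧ p.2 i = q.1 i then (1:ℂ) else 0)) *
        ∏ i ∈ Finset.univ \ S, (if p.1 i = q.1 i ∧ p.2 i = q.2 i then (1:ℂ) else 0))
      = if q = (mixF S p.2 p.1, mixF S p.1 p.2) then 1 else 0 := by
    intro S p q
    rw [Finset.prod_boole, Finset.prod_boole]
    by_cases h : q = (mixF S p.2 p.1, mixF S p.1 p.2)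
    · subst h
      rw [if_pos rfl, if_pos, if_pos, one_mul]
      · intro i hi
        rw [Finset.mem_sdiff] at hi
        simp [mixF, hi.2]
      · intro i hi
        simp [mixF, hi]
    · rw [if_neg h]
      by_cases h1 : ∀ i ∈ S, p.1 i = q.2 i ∧ p.2 i = q.1 i
      · by_cases h2 : ∀ i ∈ Finset.univ \ S, p.1 i = q.1 i ∧ p.2 i = q.2 i
        · exfalso
          apply h
          refine Prod.ext (funext fun i => ?_) (funext fun i => ?_) <;>
            by_cases hi : i ∈ S
          · simpa [mixF, hi] using (h1 i hi).2.symm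
          · simpa [mixF, hi] using (h2 i (by simp [hi])).1.symm
          · simpa [mixF, hi] using (h1 i hi).1.symm
          · simpa [mixF, hi] using (h2 i (by simp [hi])).2.symm
        · rw [if_neg h2, mul_zero]
      · rw [if_neg h1, zero_mul]
  calc (productTestOp d * (ρ ⊗ₖ ρ)).trace
      = ∑ p : (∀ i, Fin (d i)) × (∀ i, Fin (d i)),
          ∑ q : (∀ i, Fin (d i)) × (∀ i, Fin (d i)),
            productTestOp d p q * (ρ q.1 p.1 * ρ q.2 p.2) := by
        simp [Matrix.trace, Matrix.diag, Matrix.mul_apply, Matrix.kroneckerMap_apply]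
    _ = (1 / 2 ^ m : ℂ) * ∑ S ∈ (Finset.univ : Finset (Fin m)).powerset,
          ∑ p : (∀ i, Fin (d i)) × (∀ i, Fin (d i)),
          ∑ q : (∀ i, Fin (d i)) × (∀ i, Fin (d i)),
            (if q = (mixF S p.2 p.1, mixF S p.1 p.2) then (1:ℂ) else 0)
              * (ρ q.1 p.1 * ρ q.2 p.2) := by
        have step : ∀ p q : (∀ i, Fin (d i)) × (∀ i, Fin (d i)),
            productTestOp d p q * (ρ q.1 p.1 * ρ q.2 p.2)
              = (1 / 2 ^ m : ℂ) * ∑ S ∈ (Finset.univ : Finset (Fin m)).powerset,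
                  (if q = (mixF S p.2 p.1, mixF S p.1 p.2) then (1:ℂ) else 0)
                    * (ρ q.1 p.1 * ρ q.2 p.2) := by
          intro p q
          rw [hP, mul_assoc, Finset.sum_mul]
          exact congrArg _ (Finset.sum_congr rfl fun S _ => by rw [hind])
        simp_rw [step, ← Finset.mul_sum]
        congr 1
        calc (∑ p : (∀ i, Fin (d i)) × (∀ i, Fin (d i)),
              ∑ q : (∀ i, Fin (d i)) × (∀ i, Fin (d i)),
              ∑ S ∈ (Finset.univ : Finset (Fin m)).powerset,
                (if q = (mixF S p.2 p.1, mixF S p.1 p.2) then (1:ℂ) else 0)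
                  * (ρ q.1 p.1 * ρ q.2 p.2))
            = ∑ p : (∀ i, Fin (d i)) × (∀ i, Fin (d i)),
              ∑ S ∈ (Finset.univ : Finset (Fin m)).powerset,
              ∑ q : (∀ i, Fin (d i)) × (∀ i, Fin (d i)),
                (if q = (mixF S p.2 p.1, mixF S p.1 p.2) then (1:ℂ) else 0)
                  * (ρ q.1 p.1 * ρ q.2 p.2) :=
              Finset.sum_congr rfl fun p _ => Finset.sum_comm
          _ = _ := Finset.sum_comm
    _ = (1 / 2 ^ m : ℂ) * ∑ S ∈ (Finset.univ : Finset (Fin m)).powerset,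
          ∑ p : (∀ i, Fin (d i)) × (∀ i, Fin (d i)),
            ρ (mixF S p.2 p.1) p.1 * ρ (mixF S p.1 p.2) p.2 := by
        congr 1
        refine Finset.sum_congr rfl fun S _ => ?_
        refine Finset.sum_congr rfl fun p _ => ?_
        simp_rw [ite_mul, one_mul, zero_mul]
        simp
    _ = (1 / 2 ^ m) * ∑ S : Finset (Fin m), (reducedState ρ S * reducedState ρ S).trace := by
        rw [Finset.powerset_univ]
        congr 1
        exact Finset.sum_congr rfl fun S _ => (trace_sq_reduced ρ S).symm
end

section
/- Let ρ_{AB} be a state and M = (Π₀, Π₁) a binary projective measurement with M(ρ) = Π₀ρΠ₀ + Π₁ρΠ₁. If Tr[(Tr_B(M(ρ_{AB})))²] ≥ 1 − ε for ε ≤ 1/4, then ‖Tr_B(ρ_{AB}) − Tr_B(M(ρ_{AB}))‖₁ ≤ ε^{1/4} (up to a constant); in particular, writing M(ρ_{AB}) = p₀σ₀ + p₁σ₁ for the reduced post-measurement states σ_b with probabilities p_b, either some p_b ≥ 1 − √ε, or Tr(σ₀σ₁) ≥ 1 − √ε. -/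
open Matrix
open scoped ComplexOrder

/-- The trace norm (sum of singular values) of a complex square matrix. -/
noncomputable def traceNorm {n : Type*} [Fintype n] [DecidableEq n] (A : Matrix n n ℂ) : ℝ :=
  ∑ i, Real.sqrt ((Matrix.posSemidef_conjTranspose_mul_self A).1.eigenvalues i)

/-- An orthogonal projection: Hermitian and idempotent. -/
def IsProjection {n : Type*} [Fintype n] (P : Matrix n n ℂ) : Prop :=
  P.IsHermitian ∧ P * P = P

/-- The partial trace over the second register. -/
noncomputable def ptB {A B : Type*} [Fintype B] (M : Matrix (A × B) (A × B) ℂ) :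
    Matrix A A ℂ := fun a a' => ∑ b, M (a, b) (a', b)

namespace GM

variable {n : Type*} [Fintype n] [DecidableEq n]

-- chunk1


variable {n : Type*} [Fintype n] [DecidableEq n]

/-- diagonal calculus for a Hermitian matrix -/
noncomputable def herDiag {H : Matrix n n ℂ} (hH : H.IsHermitian) (d : n → ℝ) : Matrix n n ℂ :=
  (hH.eigenvectorUnitary : Matrix n n ℂ) * diagonal (fun i => (d i : ℂ)) *
    star (hH.eigenvectorUnitary : Matrix n n ℂ)

variable {H : Matrix n n ℂ} (hH : H.IsHermitian)

lemma herDiag_mul (d e : n → ℝ) :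
    herDiag hH d * herDiag hH e = herDiag hH (fun i => d i * e i) := by
  unfold herDiag
  have h1 : star (hH.eigenvectorUnitary : Matrix n n ℂ) * (hH.eigenvectorUnitary : Matrix n n ℂ) = 1 :=
    Matrix.mem_unitaryGroup_iff'.mp (hH.eigenvectorUnitary).2
  calc (hH.eigenvectorUnitary : Matrix n n ℂ) * diagonal (fun i => (d i : ℂ)) *
      star (hH.eigenvectorUnitary : Matrix n n ℂ) *
      ((hH.eigenvectorUnitary : Matrix n n ℂ) * diagonal (fun i => (e i : ℂ)) *
      star (hH.eigenvectorUnitary : Matrix n n ℂ))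
      = (hH.eigenvectorUnitary : Matrix n n ℂ) * (diagonal (fun i => (d i : ℂ)) *
        ((star (hH.eigenvectorUnitary : Matrix n n ℂ) * (hH.eigenvectorUnitary : Matrix n n ℂ)) *
        diagonal (fun i => (e i : ℂ)))) * star (hH.eigenvectorUnitary : Matrix n n ℂ) := by
        simp only [Matrix.mul_assoc]
    _ = (hH.eigenvectorUnitary : Matrix n n ℂ) * diagonal (fun i => (d i * e i : ℂ)) *
        star (hH.eigenvectorUnitary : Matrix n n ℂ) := by
        rw [h1, Matrix.one_mul, diagonal_mul_diagonal]
    _ = _ := by push_cast; rfl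

lemma trace_herDiag (d : n → ℝ) : (herDiag hH d).trace = ∑ i, (d i : ℂ) := by
  unfold herDiag
  rw [Matrix.trace_mul_cycle,
    Matrix.mem_unitaryGroup_iff'.mp (hH.eigenvectorUnitary).2, Matrix.one_mul, trace_diagonal]

lemma diagReal_conjTranspose (d : n → ℝ) :
    (diagonal (fun i => (d i : ℂ)))ᴴ = diagonal (fun i => (d i : ℂ)) := by
  rw [diagonal_conjTranspose]
  congr 1
  funext i
  simp [Pi.star_def]

lemma herDiag_isHermitian (d : n → ℝ) : (herDiag hH d).IsHermitian := by
  unfold herDiag Matrix.IsHermitian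
  rw [star_eq_conjTranspose, conjTranspose_mul, conjTranspose_mul,
    conjTranspose_conjTranspose, diagReal_conjTranspose, Matrix.mul_assoc]

lemma herDiag_posSemidef {d : n → ℝ} (hd : ∀ i, 0 ≤ d i) : (herDiag hH d).PosSemidef := by
  have : herDiag hH d =
      (diagonal (fun i => (Real.sqrt (d i) : ℂ)) * star (hH.eigenvectorUnitary : Matrix n n ℂ))ᴴ *
      (diagonal (fun i => (Real.sqrt (d i) : ℂ)) * star (hH.eigenvectorUnitary : Matrix n n ℂ)) := by
    rw [conjTranspose_mul, star_eq_conjTranspose, conjTranspose_conjTranspose,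
      diagReal_conjTranspose]
    unfold herDiag
    have he : (fun i => (Real.sqrt (d i) : ℂ) * (Real.sqrt (d i) : ℂ)) = fun i => ((d i : ℂ)) := by
      funext i
      rw [← Complex.ofReal_mul, Real.mul_self_sqrt (hd i)]
    rw [Matrix.mul_assoc, Matrix.mul_assoc, ← Matrix.mul_assoc (diagonal _),
      diagonal_mul_diagonal, he, star_eq_conjTranspose]
  rw [this]
  exact posSemidef_conjTranspose_mul_self _

lemma herDiag_eigenvalues : herDiag hH hH.eigenvalues = H := by
  unfold herDiag
  exact (hH.spectral_theorem).symm

lemma herDiag_add (d e : n → ℝ) :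
    herDiag hH d + herDiag hH e = herDiag hH (fun i => d i + e i) := by
  unfold herDiag
  rw [← Matrix.add_mul, ← Matrix.mul_add, diagonal_add]
  norm_cast

lemma herDiag_sub (d e : n → ℝ) :
    herDiag hH d - herDiag hH e = herDiag hH (fun i => d i - e i) := by
  unfold herDiag
  rw [← Matrix.sub_mul, ← Matrix.mul_sub, diagonal_sub]
  norm_cast

lemma herDiag_one : herDiag hH (fun _ => 1) = 1 := by
  unfold herDiag
  have : diagonal (fun i : n => ((1:ℝ) : ℂ)) = 1 := by simp
  rw [this, Matrix.mul_one, Matrix.mem_unitaryGroup_iff.mp (hH.eigenvectorUnitary).2]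

lemma trace_herDiag_mul (d e : n → ℝ) :
    ((herDiag hH d) * (herDiag hH e)).trace = ∑ i, ((d i * e i : ℝ) : ℂ) := by
  rw [herDiag_mul, trace_herDiag]



variable {H M Q D : Matrix n n ℂ}

lemma trace_re_eq_sum (hH : H.IsHermitian) : H.trace.re = ∑ i, hH.eigenvalues i := by
  conv_lhs => rw [← herDiag_eigenvalues hH, trace_herDiag hH]
  rw [← Complex.ofReal_sum, Complex.ofReal_re]

lemma trace_mul_self_re (hH : H.IsHermitian) :
    (H * H).trace.re = ∑ i, hH.eigenvalues i ^ 2 := by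
  conv_lhs => rw [← herDiag_eigenvalues hH, trace_herDiag_mul hH]
  rw [← Complex.ofReal_sum, Complex.ofReal_re]
  congr 1
  funext i
  ring

lemma trace_re_nonneg (hM : M.PosSemidef) : 0 ≤ M.trace.re := by
  rw [trace_re_eq_sum hM.1]
  exact Finset.sum_nonneg fun i _ => hM.eigenvalues_nonneg i

lemma trace_mul_re_nonneg (hQ : Q.PosSemidef) (hM : M.PosSemidef) :
    0 ≤ (Q * M).trace.re := by
  set Sq := herDiag hQ.1 (fun i => Real.sqrt (hQ.1.eigenvalues i)) with hSq
  have hs : Sq * Sq = Q := by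
    rw [hSq, herDiag_mul]
    conv_rhs => rw [← herDiag_eigenvalues hQ.1]
    congr 1
    funext i
    exact Real.mul_self_sqrt (hQ.eigenvalues_nonneg i)
  have hherm : Sq.conjTranspose = Sq := herDiag_isHermitian hQ.1 _
  have : (Q * M).trace = (Sqᴴ * M * Sq).trace := by
    conv_lhs => rw [← hs]
    rw [Matrix.mul_assoc, Matrix.trace_mul_comm, hherm]
  rw [this]
  exact trace_re_nonneg (hM.conjTranspose_mul_mul_same Sq)

lemma trace_mul_re_le (hQ1 : (1 - Q).PosSemidef) (hM : M.PosSemidef) :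
    (Q * M).trace.re ≤ M.trace.re := by
  have h := trace_mul_re_nonneg hQ1 hM
  rw [Matrix.sub_mul, Matrix.one_mul, trace_sub, Complex.sub_re] at h
  linarith

lemma proj_posSemidef {P : Matrix n n ℂ} (hP : P.IsHermitian) (hPP : P * P = P) :
    P.PosSemidef := by
  have : P = Pᴴ * P := by rw [hP.eq, hPP]
  rw [this]
  exact posSemidef_conjTranspose_mul_self P

/-- Key bound: for `0 ≤ Q ≤ 1` and Hermitian `A`, `Re Tr(QA) ≤ ∑ max(eig A, 0)`. -/
lemma trace_mul_re_le_sum_pos (hA : D.IsHermitian) (hQ : Q.PosSemidef)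
    (hQ1 : (1 - Q).PosSemidef) :
    (Q * D).trace.re ≤ ∑ i, max (hA.eigenvalues i) 0 := by
  set Ap := herDiag hA (fun i => max (hA.eigenvalues i) 0) with hAp
  set Am := herDiag hA (fun i => max (-hA.eigenvalues i) 0) with hAm
  have hApPSD : Ap.PosSemidef := herDiag_posSemidef hA fun i => le_max_right _ _
  have hAmPSD : Am.PosSemidef := herDiag_posSemidef hA fun i => le_max_right _ _
  have hsplit : D = Ap - Am := by
    rw [hAp, hAm, herDiag_sub hA]
    conv_lhs => rw [← herDiag_eigenvalues hA]
    congr 1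
    funext i
    simp [max_zero_sub_max_neg_zero_eq_self]
  have h1 : (Q * D).trace.re = (Q * Ap).trace.re - (Q * Am).trace.re := by
    rw [hsplit, Matrix.mul_sub, trace_sub, Complex.sub_re]
  have h2 : 0 ≤ (Q * Am).trace.re := trace_mul_re_nonneg hQ hAmPSD
  have h3 : (Q * Ap).trace.re ≤ Ap.trace.re := trace_mul_re_le hQ1 hApPSD
  have h4 : Ap.trace.re = ∑ i, max (hA.eigenvalues i) 0 := by
    rw [hAp, trace_herDiag hA, ← Complex.ofReal_sum, Complex.ofReal_re]
  linarith

/-- The trace norm of a Hermitian matrix is the sum of the absolute values of its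
eigenvalues. -/
lemma traceNorm_hermitian (hD : D.IsHermitian) :
    traceNorm D = ∑ i, |hD.eigenvalues i| := by
  have hM := Matrix.posSemidef_conjTranspose_mul_self D
  have hT : (herDiag hD (fun i => |hD.eigenvalues i|)).PosSemidef :=
    herDiag_posSemidef hD fun i => abs_nonneg _
  have h2 : herDiag hD (fun i => |hD.eigenvalues i|) ^ 2 = Dᴴ * D := by
    rw [pow_two, herDiag_mul hD]
    have : (fun i => |hD.eigenvalues i| * |hD.eigenvalues i|) =
        fun i => hD.eigenvalues i * hD.eigenvalues i := by
      funext i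
      exact abs_mul_abs_self _
    rw [this, ← herDiag_mul hD, herDiag_eigenvalues hD, hD.eq]
  open scoped MatrixOrder in
  have heq : herDiag hD (fun i => |hD.eigenvalues i|) = CFC.sqrt (Dᴴ * D) :=
    ((CFC.sqrt_eq_iff _ _ hM.nonneg hT.nonneg).mpr (by rw [← pow_two]; exact h2)).symm
  open scoped MatrixOrder in
  have hsqrt_trace : (CFC.sqrt (Dᴴ * D)).trace = ∑ i, ((Real.sqrt (hM.1.eigenvalues i) : ℝ) : ℂ) := by
    have : CFC.sqrt (Dᴴ * D) = herDiag hM.1 (fun i => Real.sqrt (hM.1.eigenvalues i)) := by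
      rw [CFC.sqrt_eq_real_sqrt _ hM.nonneg, cfcₙ_eq_cfc, hM.1.cfc_eq]
      rfl
    rw [this, trace_herDiag]
  have htr : (∑ i, ((|hD.eigenvalues i| : ℝ) : ℂ)) = ∑ i, ((Real.sqrt (hM.1.eigenvalues i) : ℝ) : ℂ) := by
    rw [← trace_herDiag hD (fun i => |hD.eigenvalues i|), heq, hsqrt_trace]
  have := congrArg Complex.re htr
  rw [← Complex.ofReal_sum, ← Complex.ofReal_sum, Complex.ofReal_re, Complex.ofReal_re] at this
  unfold traceNorm
  rw [← this]

section PT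
open Kronecker
variable {A B : Type*} [Fintype A] [Fintype B] [DecidableEq A] [DecidableEq B]

lemma ptB_add (M N : Matrix (A × B) (A × B) ℂ) : ptB (M + N) = ptB M + ptB N := by
  ext a a'
  simp [ptB, Finset.sum_add_distrib]

lemma ptB_sub (M N : Matrix (A × B) (A × B) ℂ) : ptB (M - N) = ptB M - ptB N := by
  ext a a'
  simp [ptB, Finset.sum_sub_distrib]

lemma ptB_trace (M : Matrix (A × B) (A × B) ℂ) : (ptB M).trace = M.trace := by
  simp [ptB, Matrix.trace, Matrix.diag, Fintype.sum_prod_type]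

lemma ptB_conjTranspose (M : Matrix (A × B) (A × B) ℂ) : (ptB M)ᴴ = ptB Mᴴ := by
  ext a a'
  simp [ptB, conjTranspose_apply, map_sum]

lemma ptB_isHermitian {M : Matrix (A × B) (A × B) ℂ} (hM : M.IsHermitian) :
    (ptB M).IsHermitian := by
  unfold Matrix.IsHermitian
  rw [ptB_conjTranspose, hM.eq]


lemma trace_mul_ptB (N : Matrix A A ℂ) (M : Matrix (A × B) (A × B) ℂ) :
    (N * ptB M).trace = ((N ⊗ₖ (1 : Matrix B B ℂ)) * M).trace := by
  simp only [Matrix.trace, Matrix.diag, Matrix.mul_apply, ptB, Fintype.sum_prod_type,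
    kroneckerMap_apply, Matrix.one_apply, mul_ite, mul_one, mul_zero, ite_mul, zero_mul,
    Finset.mul_sum, Finset.sum_ite_eq, Finset.mem_univ, if_true]
  exact Finset.sum_congr rfl fun a _ => Finset.sum_comm

lemma dot_aux {M : Matrix (A × B) (A × B) ℂ} (x : A → ℂ) (b : B) :
    star (fun p : A × B => if p.2 = b then x p.1 else 0) ⬝ᵥ
        M *ᵥ (fun p : A × B => if p.2 = b then x p.1 else 0) =
      ∑ a, ∑ a', star (x a) * (M (a, b) (a', b) * x a') := by
  simp only [dotProduct, mulVec, Pi.star_apply, Fintype.sum_prod_type,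
    apply_ite (star : ℂ → ℂ), star_zero,
    ite_mul, zero_mul, mul_ite, mul_zero, Finset.mul_sum]
  refine Finset.sum_congr rfl fun a _ => ?_
  have h : ∀ c : B, (∑ a' : A, if c = b then star (x a) * (M (a, c) (a', b) * x a') else 0)
      = if c = b then ∑ a' : A, star (x a) * (M (a, c) (a', b) * x a') else 0 := by
    intro c
    split <;> simp
  simp only [h, Finset.sum_ite_eq', Finset.mem_univ, if_true]

lemma quad_ptB {M : Matrix (A × B) (A × B) ℂ} (x : A → ℂ) :
    star x ⬝ᵥ (ptB M) *ᵥ x =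
      ∑ b, star (fun p : A × B => if p.2 = b then x p.1 else 0) ⬝ᵥ
        M *ᵥ (fun p : A × B => if p.2 = b then x p.1 else 0) := by
  have hR : (∑ b, star (fun p : A × B => if p.2 = b then x p.1 else 0) ⬝ᵥ
        M *ᵥ (fun p : A × B => if p.2 = b then x p.1 else 0))
      = ∑ b : B, ∑ a : A, ∑ a' : A, star (x a) * (M (a, b) (a', b) * x a') :=
    Finset.sum_congr rfl fun b _ => dot_aux x b
  rw [hR]
  simp only [dotProduct, mulVec, ptB, Pi.star_apply, Finset.mul_sum, Finset.sum_mul,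
    mul_assoc]
  have h1 : (∑ a : A, ∑ a' : A, ∑ b : B, star (x a) * (M (a, b) (a', b) * x a'))
      = ∑ a : A, ∑ b : B, ∑ a' : A, star (x a) * (M (a, b) (a', b) * x a') :=
    Finset.sum_congr rfl fun a _ =>
      Finset.sum_comm (s := (Finset.univ : Finset A)) (t := (Finset.univ : Finset B))
        (f := fun a' b => star (x a) * (M (a, b) (a', b) * x a'))
  rw [h1]
  exact Finset.sum_comm (s := (Finset.univ : Finset A)) (t := (Finset.univ : Finset B))
    (f := fun a b => ∑ a' : A, star (x a) * (M (a, b) (a', b) * x a'))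

lemma ptB_posSemidef {M : Matrix (A × B) (A × B) ℂ} (hM : M.PosSemidef) :
    (ptB M).PosSemidef := by
  refine .of_dotProduct_mulVec_nonneg (ptB_isHermitian hM.1) fun x => ?_
  rw [quad_ptB]
  exact Finset.sum_nonneg fun b _ => hM.dotProduct_mulVec_nonneg _

lemma kron_one_conjTranspose (N : Matrix A A ℂ) :
    (N ⊗ₖ (1 : Matrix B B ℂ))ᴴ = Nᴴ ⊗ₖ (1 : Matrix B B ℂ) := by
  ext p q
  simp only [conjTranspose_apply, kroneckerMap_apply, Matrix.one_apply]
  by_cases h : p.2 = q.2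
  · simp [h]
  · have h' : ¬ q.2 = p.2 := fun e => h e.symm
    simp [h, h']

lemma kron_one_mul (N N' : Matrix A A ℂ) :
    (N ⊗ₖ (1 : Matrix B B ℂ)) * (N' ⊗ₖ (1 : Matrix B B ℂ)) = (N * N') ⊗ₖ (1 : Matrix B B ℂ) := by
  rw [← Matrix.mul_kronecker_mul, Matrix.one_mul]

end PT


section RankOne
variable {n : Type*} [Fintype n] [DecidableEq n]


lemma real_smul_vec (r : ℝ) (v : n → ℂ) : r • v = (r : ℂ) • v := by
  funext a
  simp [Complex.real_smul]

lemma star_dot (v w : n → ℂ) : star (v ⬝ᵥ w) = star w ⬝ᵥ star v := by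
  simp only [dotProduct, star_sum, StarMul.star_mul, Pi.star_apply]

lemma vecMulVec_mulVec (u w : n → ℂ) :
    (vecMulVec u (star u)) *ᵥ w = (star u ⬝ᵥ w) • u := by
  funext a
  simp [vecMulVec_apply, mulVec, dotProduct, Finset.sum_mul, Finset.mul_sum]
  refine Finset.sum_congr rfl fun b _ => ?_
  ring

lemma quad_vecMulVec (u w : n → ℂ) :
    star w ⬝ᵥ (vecMulVec u (star u)) *ᵥ w = (star u ⬝ᵥ w) * star (star u ⬝ᵥ w) := by
  rw [vecMulVec_mulVec, dotProduct_smul, smul_eq_mul]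
  congr 1
  rw [star_dot, star_star]

lemma eigBasis_orthonormal {H : Matrix n n ℂ} (hH : H.IsHermitian) (k l : n) :
    star (⇑(hH.eigenvectorBasis k)) ⬝ᵥ ⇑(hH.eigenvectorBasis l) = if k = l then 1 else 0 := by
  have h := hH.eigenvectorBasis.orthonormal
  rw [orthonormal_iff_ite] at h
  have h2 := h k l
  rwa [EuclideanSpace.inner_eq_star_dotProduct, dotProduct_comm] at h2

lemma one_neg_eig {X : Matrix n n ℂ} (hX : X.PosSemidef) (u : n → ℂ)
    (hherm : (X - vecMulVec u (star u)).IsHermitian) {i j : n} (hij : i ≠ j)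
    (hi : hherm.eigenvalues i < 0) (hj : hherm.eigenvalues j < 0) : False := by
  set ψ := vecMulVec u (star u) with hψ
  set vi := ⇑(hherm.eigenvectorBasis i) with hvi
  set vj := ⇑(hherm.eigenvectorBasis j) with hvj
  set ci := star u ⬝ᵥ vi with hci
  set cj := star u ⬝ᵥ vj with hcj
  obtain ⟨α, β, hnz, hzero⟩ : ∃ α β : ℂ, ¬(α = 0 ∧ β = 0) ∧ α * ci + β * cj = 0 := by
    by_cases h : ci = 0 ∧ cj = 0
    · exact ⟨1, 0, by simp, by simp [h.1, h.2]⟩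
    · refine ⟨cj, -ci, fun hc => h ⟨by simpa using hc.2, hc.1⟩, by ring⟩
  set w := α • vi + β • vj with hw
  have hwu : star u ⬝ᵥ w = 0 := by
    rw [hw, dotProduct_add, dotProduct_smul, dotProduct_smul, smul_eq_mul, smul_eq_mul,
      ← hci, ← hcj, hzero]
  have hDvi : (X - ψ) *ᵥ vi = (hherm.eigenvalues i : ℂ) • vi := by
    rw [hherm.mulVec_eigenvectorBasis, real_smul_vec]
  have hDvj : (X - ψ) *ᵥ vj = (hherm.eigenvalues j : ℂ) • vj := by
    rw [hherm.mulVec_eigenvectorBasis, real_smul_vec]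
  have hDw : (X - ψ) *ᵥ w = (α * hherm.eigenvalues i) • vi + (β * hherm.eigenvalues j) • vj := by
    rw [hw, mulVec_add, mulVec_smul, mulVec_smul, hDvi, hDvj, smul_smul, smul_smul]
  have hq : star w ⬝ᵥ (X - ψ) *ᵥ w =
      ((Complex.normSq α * hherm.eigenvalues i + Complex.normSq β * hherm.eigenvalues j : ℝ) : ℂ) := by
    rw [hDw, hw]
    have hsw : star (α • vi + β • vj) = star α • star vi + star β • star vj := by
      rw [star_add, star_smul, star_smul]
    rw [hsw]
    simp only [add_dotProduct, dotProduct_add, smul_dotProduct, dotProduct_smul, smul_eq_mul]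
    have o1 : star vi ⬝ᵥ vi = 1 := by simpa using eigBasis_orthonormal hherm i i
    have o2 : star vj ⬝ᵥ vj = 1 := by simpa using eigBasis_orthonormal hherm j j
    have o3 : star vi ⬝ᵥ vj = 0 := by simpa [hij] using eigBasis_orthonormal hherm i j
    have o4 : star vj ⬝ᵥ vi = 0 := by simpa [hij.symm] using eigBasis_orthonormal hherm j i
    rw [o1, o2, o3, o4]
    have m1 : star α * α = (Complex.normSq α : ℂ) := by
      rw [RCLike.star_def, mul_comm, Complex.mul_conj]
    have m2 : star β * β = (Complex.normSq β : ℂ) := by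
      rw [RCLike.star_def, mul_comm, Complex.mul_conj]
    push_cast
    rw [← m1, ← m2]
    ring
  have hψw : star w ⬝ᵥ ψ *ᵥ w = 0 := by
    rw [hψ, quad_vecMulVec, hwu, zero_mul]
  have hXD : star w ⬝ᵥ X *ᵥ w =
      ((Complex.normSq α * hherm.eigenvalues i + Complex.normSq β * hherm.eigenvalues j : ℝ) : ℂ) := by
    rw [← hq]
    have : X *ᵥ w = (X - ψ) *ᵥ w + ψ *ᵥ w := by rw [Matrix.sub_mulVec]; ring_nf
    rw [this, dotProduct_add, hψw, add_zero]
  have h0 := hX.dotProduct_mulVec_nonneg w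
  rw [hXD, Complex.zero_le_real] at h0
  have hα : 0 ≤ Complex.normSq α := Complex.normSq_nonneg α
  have hβ : 0 ≤ Complex.normSq β := Complex.normSq_nonneg β
  by_cases hA : α = 0
  · have hB : β ≠ 0 := fun h => hnz ⟨hA, h⟩
    have := Complex.normSq_pos.mpr hB
    nlinarith
  · have := Complex.normSq_pos.mpr hA
    nlinarith

end RankOne

section More
variable {n : Type*} [Fintype n] [DecidableEq n] {H M : Matrix n n ℂ}

lemma herDiag_smul (hH : H.IsHermitian) (r : ℝ) (d : n → ℝ) :
    r • herDiag hH d = herDiag hH (fun i => r * d i) := by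
  unfold herDiag
  have h : diagonal (fun i => ((r * d i : ℝ) : ℂ)) = r • diagonal (fun i => ((d i : ℝ) : ℂ)) := by
    ext i j
    rw [Matrix.smul_apply, diagonal_apply, diagonal_apply]
    split <;> simp [Complex.real_smul]
  rw [h, Matrix.mul_smul, Matrix.smul_mul]

lemma herDiag_single (hH : H.IsHermitian) (t : n) :
    herDiag hH (fun i => if i = t then 1 else 0) =
      vecMulVec (⇑(hH.eigenvectorBasis t)) (star ⇑(hH.eigenvectorBasis t)) := by
  ext a a'
  unfold herDiag
  rw [Matrix.mul_apply, vecMulVec_apply]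
  have h : ∀ k, ((hH.eigenvectorUnitary : Matrix n n ℂ) * diagonal
      (fun i => ((if i = t then (1:ℝ) else 0 : ℝ) : ℂ))) a k *
      (star (hH.eigenvectorUnitary : Matrix n n ℂ)) k a' =
      if k = t then (hH.eigenvectorUnitary : Matrix n n ℂ) a k *
        star ((hH.eigenvectorUnitary : Matrix n n ℂ) a' k) else 0 := by
    intro k
    rw [Matrix.mul_diagonal, Matrix.star_apply]
    split <;> simp
  rw [Finset.sum_congr rfl fun k _ => h k, Finset.sum_ite_eq', if_pos (Finset.mem_univ t)]
  rw [Matrix.IsHermitian.eigenvectorUnitary_apply, Matrix.IsHermitian.eigenvectorUnitary_apply]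
  simp

lemma trace_sq_le (hM : M.PosSemidef) : (M * M).trace.re ≤ (M.trace.re)^2 := by
  rw [trace_mul_self_re hM.1, trace_re_eq_sum hM.1]
  exact Finset.sum_sq_le_sq_sum_of_nonneg fun i _ => hM.eigenvalues_nonneg i

end More

section Main
open Kronecker
variable {A B : Type*} [Fintype A] [Fintype B] [DecidableEq A] [DecidableEq B]

set_option maxHeartbeats 1000000 in
lemma part2 (ρ : Matrix (A × B) (A × B) ℂ) (hρ : ρ.PosSemidef) (htr : ρ.trace = 1)
    (P₀ P₁ : Matrix (A × B) (A × B) ℂ)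
    (hP₀ : P₀.IsHermitian ∧ P₀ * P₀ = P₀) (hP₁ : P₁.IsHermitian ∧ P₁ * P₁ = P₁)
    (hsum : P₀ + P₁ = 1) (ε : ℝ) (hε0 : 0 ≤ ε) (hε : ε ≤ 1 / 4)
    (hpurity : 1 - ε ≤ ((ptB (P₀ * ρ * P₀ + P₁ * ρ * P₁) *
      ptB (P₀ * ρ * P₀ + P₁ * ρ * P₁)).trace).re) :
    (1 - Real.sqrt ε ≤ ((P₀ * ρ).trace).re ∨
     1 - Real.sqrt ε ≤ ((P₁ * ρ).trace).re ∨
     1 - Real.sqrt ε ≤ (((((P₀ * ρ).trace).re)⁻¹ • ptB (P₀ * ρ * P₀) *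
        ((((P₁ * ρ).trace).re)⁻¹ • ptB (P₁ * ρ * P₁))).trace).re) := by
  by_cases h0 : 1 - Real.sqrt ε ≤ ((P₀ * ρ).trace).re
  · exact Or.inl h0
  by_cases h1 : 1 - Real.sqrt ε ≤ ((P₁ * ρ).trace).re
  · exact Or.inr (Or.inl h1)
  refine Or.inr (Or.inr ?_)
  push_neg at h0 h1
  set A0 := ptB (P₀ * ρ * P₀) with hA0
  set A1 := ptB (P₁ * ρ * P₁) with hA1
  have hPSD0 : (P₀ * ρ * P₀).PosSemidef := by
    have h := hρ.mul_mul_conjTranspose_same P₀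
    rwa [hP₀.1.eq] at h
  have hPSD1 : (P₁ * ρ * P₁).PosSemidef := by
    have h := hρ.mul_mul_conjTranspose_same P₁
    rwa [hP₁.1.eq] at h
  have hA0PSD : A0.PosSemidef := ptB_posSemidef hPSD0
  have hA1PSD : A1.PosSemidef := ptB_posSemidef hPSD1
  have htr0 : A0.trace = (P₀ * ρ).trace := by
    rw [hA0, ptB_trace, Matrix.trace_mul_cycle, hP₀.2]
  have htr1 : A1.trace = (P₁ * ρ).trace := by
    rw [hA1, ptB_trace, Matrix.trace_mul_cycle, hP₁.2]
  set p0 := ((P₀ * ρ).trace).re with hp0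
  set p1 := ((P₁ * ρ).trace).re with hp1
  have hpsum : p0 + p1 = 1 := by
    have h : (P₀ * ρ).trace + (P₁ * ρ).trace = 1 := by
      rw [← Matrix.trace_add, ← Matrix.add_mul, hsum, Matrix.one_mul, htr]
    have h2 := congrArg Complex.re h
    rwa [Complex.add_re] at h2
  have hYY : ptB (P₀ * ρ * P₀ + P₁ * ρ * P₁) = A0 + A1 := ptB_add _ _
  rw [hYY] at hpurity
  have hexp : ((A0 + A1) * (A0 + A1)).trace.re =
      (A0 * A0).trace.re + (A1 * A1).trace.re + 2 * (A0 * A1).trace.re := by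
    have hc : (A1 * A0).trace = (A0 * A1).trace := Matrix.trace_mul_comm _ _
    rw [Matrix.add_mul, Matrix.mul_add, Matrix.mul_add, Matrix.trace_add, Matrix.trace_add,
      Matrix.trace_add, hc]
    simp only [Complex.add_re]
    ring
  have h00 : (A0 * A0).trace.re ≤ p0 ^ 2 := by
    have := trace_sq_le hA0PSD
    rwa [htr0, ← hp0] at this
  have h11 : (A1 * A1).trace.re ≤ p1 ^ 2 := by
    have := trace_sq_le hA1PSD
    rwa [htr1, ← hp1] at this
  set s := Real.sqrt ε with hs
  have hs0 : 0 ≤ s := Real.sqrt_nonneg ε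
  have hs2 : s ^ 2 = ε := Real.sq_sqrt hε0
  have hshalf : s ≤ 1 / 2 := by
    have h := Real.sqrt_le_sqrt hε
    rwa [show (1/4 : ℝ) = (1/2)^2 by norm_num, Real.sqrt_sq (by norm_num : (0:ℝ) ≤ 1/2)] at h
  have hp0lt : s < p0 := by linarith
  have hp1lt : s < p1 := by linarith
  have hp0pos : 0 < p0 := lt_of_le_of_lt hs0 hp0lt
  have hp1pos : 0 < p1 := lt_of_le_of_lt hs0 hp1lt
  have hppos : 0 < p0 * p1 := mul_pos hp0pos hp1pos
  set c := (A0 * A1).trace.re with hcdef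
  have hc : p0 * p1 - ε / 2 ≤ c := by
    rw [hexp] at hpurity
    nlinarith [hpurity, h00, h11, hpsum]
  have hq : s - ε ≤ p0 * p1 := by
    nlinarith [mul_nonneg (le_of_lt (sub_pos.mpr hp0lt)) (le_of_lt (sub_pos.mpr hp1lt))]
  have hq2 : ε / 2 ≤ s * (p0 * p1) := by
    nlinarith [mul_le_mul_of_nonneg_left hq hs0, mul_nonneg hε0 (sub_nonneg.mpr hshalf)]
  have h2 : (1 - s) * (p0 * p1) ≤ c := by nlinarith [hc, hq2]
  have hmul : ((p0⁻¹ • A0) * (p1⁻¹ • A1)).trace.re = p0⁻¹ * p1⁻¹ * c := by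
    rw [Matrix.smul_mul, Matrix.mul_smul, smul_smul, Matrix.trace_smul]
    have : ((p0⁻¹ * p1⁻¹) • (A0 * A1).trace) = ((p0⁻¹ * p1⁻¹ : ℝ) : ℂ) * (A0 * A1).trace := by
      rw [Complex.real_smul]
    rw [this, Complex.re_ofReal_mul]
  rw [hmul]
  have heq : p0⁻¹ * p1⁻¹ * c = c / (p0 * p1) := by
    rw [div_eq_mul_inv, mul_inv]
    ring
  rw [heq]
  exact (le_div_iff₀ hppos).mpr h2

set_option maxHeartbeats 2000000 in
lemma part1 (ρ : Matrix (A × B) (A × B) ℂ) (hρ : ρ.PosSemidef) (htr : ρ.trace = 1)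
    (P₀ P₁ : Matrix (A × B) (A × B) ℂ)
    (hP₀ : P₀.IsHermitian ∧ P₀ * P₀ = P₀) (hP₁ : P₁.IsHermitian ∧ P₁ * P₁ = P₁)
    (hsum : P₀ + P₁ = 1) (ε : ℝ) (hε0 : 0 ≤ ε) (hε : ε ≤ 1 / 4)
    (hpurity : 1 - ε ≤ ((ptB (P₀ * ρ * P₀ + P₁ * ρ * P₁) *
      ptB (P₀ * ρ * P₀ + P₁ * ρ * P₁)).trace).re) :
    traceNorm (ptB ρ - ptB (P₀ * ρ * P₀ + P₁ * ρ * P₁)) ≤ 4 * ε ^ ((1 : ℝ) / 4) := by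
  have hNA : Nonempty A := by
    by_contra h
    have hEmp : IsEmpty A := not_nonempty_iff.mp h
    have hz : ((ptB (P₀ * ρ * P₀ + P₁ * ρ * P₁) *
        ptB (P₀ * ρ * P₀ + P₁ * ρ * P₁)).trace) = 0 := by
      rw [Matrix.trace, Finset.univ_eq_empty, Finset.sum_empty]
    rw [hz] at hpurity
    simp only [Complex.zero_re] at hpurity
    linarith
  set ρ' := P₀ * ρ * P₀ + P₁ * ρ * P₁ with hρ'def
  set X := ptB ρ with hXdef
  set Y := ptB ρ' with hYdef
  have hρ'PSD : ρ'.PosSemidef := by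
    have h0 := hρ.mul_mul_conjTranspose_same P₀
    rw [hP₀.1.eq] at h0
    have h1 := hρ.mul_mul_conjTranspose_same P₁
    rw [hP₁.1.eq] at h1
    exact h0.add h1
  have hcycP : ∀ P : Matrix (A × B) (A × B) ℂ, P * P = P → (P * ρ * P).trace = (P * ρ).trace := by
    intro P hPP
    rw [Matrix.trace_mul_cycle, hPP]
  have hρ'tr : ρ'.trace = 1 := by
    rw [hρ'def, Matrix.trace_add, hcycP P₀ hP₀.2, hcycP P₁ hP₁.2, ← Matrix.trace_add,
      ← Matrix.add_mul, hsum, Matrix.one_mul, htr]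
  have hXPSD : X.PosSemidef := ptB_posSemidef hρ
  have hYPSD : Y.PosSemidef := ptB_posSemidef hρ'PSD
  have hXtr : X.trace = 1 := by rw [hXdef, ptB_trace, htr]
  have hYtr : Y.trace = 1 := by rw [hYdef, ptB_trace, hρ'tr]
  have hY1 := hYPSD.1
  obtain ⟨t, -, ht⟩ := Finset.exists_max_image (Finset.univ : Finset A) hY1.eigenvalues
    Finset.univ_nonempty
  set lam := hY1.eigenvalues t with hlam
  have heignn := hYPSD.eigenvalues_nonneg
  have hsum1 : ∑ i, hY1.eigenvalues i = 1 := by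
    have h := trace_re_eq_sum hY1
    rw [hYtr] at h
    simpa using h.symm
  have hlam_le1 : lam ≤ 1 := by
    rw [← hsum1]
    exact Finset.single_le_sum (fun i _ => heignn i) (Finset.mem_univ t)
  have hlam_ge : 1 - ε ≤ lam := by
    have hYsq : 1 - ε ≤ ∑ i, hY1.eigenvalues i ^ 2 := by
      rw [← trace_mul_self_re hY1]
      exact hpurity
    have h2 : ∑ i, hY1.eigenvalues i ^ 2 ≤ lam := by
      calc ∑ i, hY1.eigenvalues i ^ 2 ≤ ∑ i, hY1.eigenvalues i * lam := by
            refine Finset.sum_le_sum fun i _ => ?_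
            rw [pow_two]
            exact mul_le_mul_of_nonneg_left (ht i (Finset.mem_univ i)) (heignn i)
        _ = lam := by rw [← Finset.sum_mul, hsum1, one_mul]
    linarith
  set u := ⇑(hY1.eigenvectorBasis t) with hu
  set ψ := vecMulVec u (star u) with hψ
  have hψd : ψ = herDiag hY1 (fun i => if i = t then 1 else 0) := (herDiag_single hY1 t).symm
  have hψherm : ψ.IsHermitian := by rw [hψd]; exact herDiag_isHermitian hY1 _
  have hψPSD : ψ.PosSemidef := by
    rw [hψd]
    exact herDiag_posSemidef hY1 (fun i => by split <;> norm_num)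
  have hψψ : ψ * ψ = ψ := by
    rw [hψd, herDiag_mul]
    refine congrArg (herDiag hY1) ?_
    funext i
    split <;> simp
  have hψtr : ψ.trace = 1 := by
    rw [hψd, trace_herDiag]
    have : ∀ i, (((if i = t then (1:ℝ) else 0) : ℝ) : ℂ) = if i = t then (1:ℂ) else 0 := by
      intro i
      split <;> simp
    rw [Finset.sum_congr rfl fun i _ => this i]
    simp
  set R := ψ ⊗ₖ (1 : Matrix B B ℂ) with hR
  have hRherm : Rᴴ = R := by rw [hR, kron_one_conjTranspose, hψherm.eq]
  have hRR : R * R = R := by rw [hR, kron_one_mul, hψψ]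
  set U := P₀ - P₁ with hU
  have hP1eq : P₁ = 1 - P₀ := by rw [← hsum]; abel
  have hUherm : Uᴴ = U := by rw [hU, Matrix.conjTranspose_sub, hP₀.1.eq, hP₁.1.eq]
  have h01 : P₀ * P₁ = 0 := by rw [hP1eq, Matrix.mul_sub, Matrix.mul_one, hP₀.2, sub_self]
  have h10 : P₁ * P₀ = 0 := by rw [hP1eq, Matrix.sub_mul, Matrix.one_mul, hP₀.2, sub_self]
  have hUU : U * U = 1 := by
    rw [hU, Matrix.sub_mul, Matrix.mul_sub, Matrix.mul_sub, hP₀.2, hP₁.2, h01, h10]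
    rw [sub_zero, zero_sub, sub_neg_eq_add, hsum]
  set S := U * R * U with hS
  have hSherm : S.IsHermitian := by
    unfold Matrix.IsHermitian
    rw [hS, Matrix.conjTranspose_mul, Matrix.conjTranspose_mul, hUherm, hRherm, Matrix.mul_assoc]
  have hSS : S * S = S := by
    rw [hS]
    calc U * R * U * (U * R * U) = U * R * (U * U) * (R * U) := by
          simp only [Matrix.mul_assoc]
      _ = U * (R * R) * U := by rw [hUU, Matrix.mul_one]; simp only [Matrix.mul_assoc]
      _ = U * R * U := by rw [hRR]
  have hSPSD : S.PosSemidef := proj_posSemidef hSherm hSS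
  have h1SPSD : (1 - S).PosSemidef := by
    refine proj_posSemidef ?_ ?_
    · unfold Matrix.IsHermitian
      rw [Matrix.conjTranspose_sub, Matrix.conjTranspose_one, hSherm.eq]
    · rw [Matrix.sub_mul, Matrix.mul_sub, Matrix.mul_sub, hSS]
      simp only [Matrix.one_mul, Matrix.mul_one]
      abel
  have cyc : ∀ (P M : Matrix (A × B) (A × B) ℂ),
      (R * (P * M * P)).trace = ((P * R * P) * M).trace := by
    intro P M
    rw [Matrix.trace_mul_comm, Matrix.mul_assoc (P * M) P R, Matrix.trace_mul_comm,
      ← Matrix.mul_assoc (P * R) P M]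
  have htwo : (P₀ * R * P₀ + P₁ * R * P₁) + (P₀ * R * P₀ + P₁ * R * P₁) = R + U * R * U := by
    rw [hU, hP1eq]
    noncomm_ring
  have hTr1 : (R * ρ').trace = ((P₀ * R * P₀ + P₁ * R * P₁) * ρ).trace := by
    rw [hρ'def, Matrix.mul_add, Matrix.trace_add, cyc P₀ ρ, cyc P₁ ρ, ← Matrix.trace_add,
      ← Matrix.add_mul]
  have hTrRρ : (R * ρ).trace = 2 * (R * ρ').trace - (S * ρ).trace := by
    have h2 : ((P₀ * R * P₀ + P₁ * R * P₁) * ρ).trace + ((P₀ * R * P₀ + P₁ * R * P₁) * ρ).trace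
        = (R * ρ).trace + (S * ρ).trace := by
      rw [← Matrix.trace_add, ← Matrix.add_mul, htwo, Matrix.add_mul, Matrix.trace_add, ← hS]
    rw [hTr1]
    linear_combination -h2
  have hTrψY : (ψ * Y).trace = (lam : ℂ) := by
    have e : (herDiag hY1 (fun i => if i = t then 1 else 0) *
        herDiag hY1 hY1.eigenvalues).trace = (lam : ℂ) := by
      rw [trace_herDiag_mul]
      have h3 : ∀ i, ((((if i = t then (1:ℝ) else 0) * hY1.eigenvalues i : ℝ)) : ℂ)
          = if i = t then ((hY1.eigenvalues i : ℝ) : ℂ) else 0 := by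
        intro i
        split <;> simp
      rw [Finset.sum_congr rfl fun i _ => h3 i, Finset.sum_ite_eq', if_pos (Finset.mem_univ t)]
    rw [herDiag_eigenvalues hY1] at e
    rw [hψd]
    exact e
  have hRρ' : (R * ρ').trace = (lam : ℂ) := by
    rw [hR, ← trace_mul_ptB, ← hYdef, hTrψY]
  have hSρ_le : (S * ρ).trace.re ≤ 1 := by
    have h4 := trace_mul_re_le h1SPSD hρ
    rw [htr] at h4
    simpa using h4
  have hψX : 1 - 2 * ε ≤ (ψ * X).trace.re := by
    have h5 : (ψ * X).trace = (R * ρ).trace := by rw [hXdef, trace_mul_ptB, ← hR]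
    rw [h5, hTrRρ, hRρ']
    have : (2 * (lam : ℂ) - (S * ρ).trace).re = 2 * lam - (S * ρ).trace.re := by
      simp [Complex.sub_re]
    rw [this]
    linarith
  have hD'herm : (X - ψ).IsHermitian := hXPSD.1.sub hψherm
  set ν := hD'herm.eigenvalues with hν
  have hνsum : ∑ i, ν i = 0 := by
    rw [hν, ← trace_re_eq_sum hD'herm, Matrix.trace_sub, hXtr, hψtr]
    simp
  have hψtr_re : ψ.trace.re = 1 := by rw [hψtr]; simp
  have hXX_le : (X * X).trace.re ≤ 1 := by
    have h6 := trace_sq_le hXPSD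
    rw [hXtr] at h6
    simpa using h6
  have hνsq : ∑ i, ν i ^ 2 ≤ 4 * ε := by
    rw [hν, ← trace_mul_self_re hD'herm]
    have hexp2 : (X - ψ) * (X - ψ) = X * X - X * ψ - ψ * X + ψ * ψ := by noncomm_ring
    rw [hexp2, hψψ]
    have hcomm : (X * ψ).trace = (ψ * X).trace := Matrix.trace_mul_comm X ψ
    have h7 : (X * X - X * ψ - ψ * X + ψ).trace.re
        = (X * X).trace.re - 2 * (ψ * X).trace.re + 1 := by
      rw [Matrix.trace_add, Matrix.trace_sub, Matrix.trace_sub, hcomm]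
      simp only [Complex.add_re, Complex.sub_re, hψtr_re]
      ring
    rw [h7]
    linarith
  have honeneg : ∀ i j, i ≠ j → ν i < 0 → ν j < 0 → False := by
    intro i j hij hi hj
    exact one_neg_eig hXPSD u hD'herm hij hi hj
  have hpos_le : ∑ i, max (ν i) 0 ≤ Real.sqrt (4 * ε) := by
    by_cases hall : ∀ i, 0 ≤ ν i
    · have h8 : ∑ i, max (ν i) 0 = ∑ i, ν i :=
        Finset.sum_congr rfl fun i _ => max_eq_left (hall i)
      rw [h8, hνsum]
      positivity
    · push_neg at hall
      obtain ⟨j, hj⟩ := hall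
      have hother : ∀ i, i ≠ j → 0 ≤ ν i := fun i hi =>
        le_of_not_gt fun h => honeneg i j hi h hj
      have e1 : ∑ i, max (ν i) 0 = max (ν j) 0 + ∑ i ∈ Finset.univ.erase j, max (ν i) 0 :=
        (Finset.add_sum_erase _ _ (Finset.mem_univ j)).symm
      have e2 : ∑ i ∈ Finset.univ.erase j, max (ν i) 0 = ∑ i ∈ Finset.univ.erase j, ν i :=
        Finset.sum_congr rfl fun i hi => max_eq_left (hother i (Finset.ne_of_mem_erase hi))
      have e3 : ν j + ∑ i ∈ Finset.univ.erase j, ν i = 0 := by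
        rw [Finset.add_sum_erase _ _ (Finset.mem_univ j), hνsum]
      have e4 : max (ν j) 0 = 0 := max_eq_right hj.le
      have e5 : ν j ^ 2 ≤ ∑ i, ν i ^ 2 :=
        Finset.single_le_sum (fun i _ => sq_nonneg (ν i)) (Finset.mem_univ j)
      have e6 : -ν j ≤ Real.sqrt (4 * ε) := by
        rw [← Real.sqrt_sq (neg_nonneg.mpr hj.le)]
        apply Real.sqrt_le_sqrt
        nlinarith
      rw [e1, e2, e4, zero_add]
      linarith
  have hDherm : (X - Y).IsHermitian := hXPSD.1.sub hYPSD.1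
  set μ := hDherm.eigenvalues with hμ
  have hμsum : ∑ i, μ i = 0 := by
    rw [hμ, ← trace_re_eq_sum hDherm, Matrix.trace_sub, hXtr, hYtr]
    simp
  set Q := herDiag hDherm (fun i => if 0 < μ i then 1 else 0) with hQ
  have hQPSD : Q.PosSemidef := herDiag_posSemidef hDherm fun i => by split <;> norm_num
  have hQ1PSD : (1 - Q).PosSemidef := by
    rw [hQ, ← herDiag_one hDherm, herDiag_sub hDherm]
    exact herDiag_posSemidef hDherm fun i => by split <;> norm_num
  have hQD : (Q * (X - Y)).trace.re = ∑ i, max (μ i) 0 := by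
    have e : ((herDiag hDherm fun i => if 0 < μ i then 1 else 0) *
        herDiag hDherm hDherm.eigenvalues).trace.re = ∑ i, max (μ i) 0 := by
      rw [trace_herDiag_mul, ← Complex.ofReal_sum, Complex.ofReal_re]
      refine Finset.sum_congr rfl fun i _ => ?_
      rw [← hμ]
      split
      · next h => rw [one_mul]; exact (max_eq_left (le_of_lt h)).symm
      · next h => rw [zero_mul]; exact (max_eq_right (not_lt.mp h)).symm
    rw [herDiag_eigenvalues hDherm] at e
    rw [hQ]
    exact e
  have htn : traceNorm (X - Y) = ∑ i, |μ i| := traceNorm_hermitian hDherm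
  have habs : ∑ i, |μ i| = 2 * ∑ i, max (μ i) 0 := by
    have g1 : ∑ i, |μ i| = ∑ i, (max (μ i) 0 + max (-μ i) 0) := by
      refine Finset.sum_congr rfl fun i _ => ?_
      rcases le_total (μ i) 0 with h | h
      · rw [abs_of_nonpos h, max_eq_right h, max_eq_left (neg_nonneg.mpr h), zero_add]
      · rw [abs_of_nonneg h, max_eq_left h, max_eq_right (neg_nonpos.mpr h), add_zero]
    have g2 : ∑ i, (max (μ i) 0 - max (-μ i) 0) = ∑ i, μ i :=
      Finset.sum_congr rfl fun i _ => max_zero_sub_max_neg_zero_eq_self (μ i)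
    rw [Finset.sum_add_distrib] at g1
    rw [Finset.sum_sub_distrib, hμsum] at g2
    linarith
  have hsplit : (Q * (X - Y)).trace.re = (Q * (X - ψ)).trace.re + (Q * (ψ - Y)).trace.re := by
    have h9 : X - Y = (X - ψ) + (ψ - Y) := by abel
    rw [h9, Matrix.mul_add, Matrix.trace_add, Complex.add_re]
  have hb1 : (Q * (X - ψ)).trace.re ≤ ∑ i, max (ν i) 0 :=
    trace_mul_re_le_sum_pos hD'herm hQPSD hQ1PSD
  have hb2 : (Q * (ψ - Y)).trace.re ≤ 1 - lam := by
    have hYψPSD : (Y - lam • ψ).PosSemidef := by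
      have e : herDiag hY1 hY1.eigenvalues -
          lam • herDiag hY1 (fun i => if i = t then 1 else 0) =
          herDiag hY1 (fun i => hY1.eigenvalues i - lam * (if i = t then 1 else 0)) := by
        rw [herDiag_smul hY1, herDiag_sub hY1]
      rw [herDiag_eigenvalues hY1] at e
      rw [hψd, e]
      refine herDiag_posSemidef hY1 fun i => ?_
      by_cases hi : i = t
      · subst hi
        simp [← hlam]
      · simp [hi, heignn i]
    have g3 : 0 ≤ (Q * (Y - lam • ψ)).trace.re := trace_mul_re_nonneg hQPSD hYψPSD
    have g4 : (Q * (Y - lam • ψ)).trace.re = (Q * Y).trace.re - lam * (Q * ψ).trace.re := by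
      rw [Matrix.mul_sub, Matrix.trace_sub, Complex.sub_re, Matrix.mul_smul, Matrix.trace_smul]
      have : (lam • (Q * ψ).trace) = ((lam : ℝ) : ℂ) * (Q * ψ).trace := Complex.real_smul
      rw [this, Complex.re_ofReal_mul]
    have g5 : (Q * ψ).trace.re ≤ 1 := by
      have := trace_mul_re_le hQ1PSD hψPSD
      rwa [hψtr_re] at this
    have g6 : 0 ≤ (Q * ψ).trace.re := trace_mul_re_nonneg hQPSD hψPSD
    have g7 : (Q * (ψ - Y)).trace.re = (Q * ψ).trace.re - (Q * Y).trace.re := by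
      rw [Matrix.mul_sub, Matrix.trace_sub, Complex.sub_re]
    rw [g7]
    nlinarith [mul_nonneg (sub_nonneg.mpr hlam_le1) (sub_nonneg.mpr g5)]
  have hfinal : traceNorm (X - Y) ≤ 2 * (Real.sqrt (4 * ε) + (1 - lam)) := by
    rw [htn, habs]
    have h10 : ∑ i, max (μ i) 0 ≤ Real.sqrt (4 * ε) + (1 - lam) := by
      rw [← hQD] at *
      linarith [hsplit, hb1, hb2, hpos_le]
    linarith
  have hs4 : Real.sqrt (4 * ε) = 2 * Real.sqrt ε := by
    rw [show (4:ℝ) * ε = 2^2 * ε by ring, Real.sqrt_mul (by positivity) ε]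
    rw [Real.sqrt_sq (by norm_num : (0:ℝ) ≤ 2)]
  set s := Real.sqrt ε with hsdef
  have hs0 : 0 ≤ s := Real.sqrt_nonneg ε
  have hs2 : s ^ 2 = ε := Real.sq_sqrt hε0
  have hshalf : s ≤ 1 / 2 := by
    have h := Real.sqrt_le_sqrt hε
    rwa [show (1/4 : ℝ) = (1/2)^2 by norm_num,
      Real.sqrt_sq (by norm_num : (0:ℝ) ≤ 1/2)] at h
  set y := ε ^ ((1 : ℝ) / 4) with hy
  have hy0 : 0 ≤ y := Real.rpow_nonneg hε0 _
  have hy2 : y ^ 2 = s := by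
    rw [hy, hsdef, Real.sqrt_eq_rpow, ← Real.rpow_natCast (ε ^ ((1:ℝ)/4)) 2,
      ← Real.rpow_mul hε0]
    norm_num
  have hy45 : y ≤ 4 / 5 := by
    nlinarith
  have h2eps : 2 * ε ≤ s := by nlinarith
  calc traceNorm (X - Y) ≤ 2 * (Real.sqrt (4 * ε) + (1 - lam)) := hfinal
    _ ≤ 2 * (2 * s + ε) := by rw [hs4]; linarith
    _ ≤ 5 * s := by nlinarith
    _ = 5 * y ^ 2 := by rw [hy2]
    _ ≤ 4 * y := by nlinarith [mul_le_mul_of_nonneg_right hy45 hy0]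

end Main

end GM

/-- Gentle measurement for approximately pure subsystems: if `M(ρ) = Π₀ρΠ₀ + Π₁ρΠ₁` and
`Tr[(Tr_B M(ρ_{AB}))²] ≥ 1 − ε` with `ε ≤ 1/4`, then
`‖Tr_B ρ_{AB} − Tr_B M(ρ_{AB})‖₁ ≤ ε^{1/4}` up to a constant (here: `4·ε^{1/4}`); and either
some outcome probability `p_b ≥ 1 − √ε`, or the normalized reduced post-measurement states
satisfy `Tr(σ₀σ₁) ≥ 1 − √ε`. -/
theorem stmt_13 {A B : Type*} [Fintype A] [Fintype B] [DecidableEq A] [DecidableEq B]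
    (ρ : Matrix (A × B) (A × B) ℂ) (hρ : IsDensityMatrix ρ)
    (P₀ P₁ : Matrix (A × B) (A × B) ℂ)
    (hP₀ : IsProjection P₀) (hP₁ : IsProjection P₁) (hsum : P₀ + P₁ = 1)
    (ε : ℝ) (hε0 : 0 ≤ ε) (hε : ε ≤ 1 / 4)
    (hpurity : 1 - ε ≤
      ((ptB (P₀ * ρ * P₀ + P₁ * ρ * P₁) * ptB (P₀ * ρ * P₀ + P₁ * ρ * P₁)).trace).re) :
    traceNorm (ptB ρ - ptB (P₀ * ρ * P₀ + P₁ * ρ * P₁)) ≤ 4 * ε ^ ((1 : ℝ) / 4) ∧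
    (1 - Real.sqrt ε ≤ ((P₀ * ρ).trace).re ∨
     1 - Real.sqrt ε ≤ ((P₁ * ρ).trace).re ∨
     1 - Real.sqrt ε ≤
      (((((P₀ * ρ).trace).re)⁻¹ • ptB (P₀ * ρ * P₀) *
        ((((P₁ * ρ).trace).re)⁻¹ • ptB (P₁ * ρ * P₁))).trace).re) := by
  obtain ⟨hρPSD, hρtr⟩ := hρ
  constructor
  · exact GM.part1 ρ hρPSD hρtr P₀ P₁ hP₀ hP₁ hsum ε hε0 hε hpurity
  · exact GM.part2 ρ hρPSD hρtr P₀ P₁ hP₀ hP₁ hsum ε hε0 hε hpurity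
end

section
/- Let A be a quantum oracle algorithm making at most T queries to a unitary oracle, and define f(U) := Pr[A^U outputs 1]. Then f is T-Lipschitz with respect to the Frobenius norm: |f(U) − f(V)| ≤ T·‖U − V‖_F for all unitaries U, V. -/
open Matrix
open scoped ComplexOrder Kronecker

/-- The Frobenius norm of a complex matrix, `‖A‖_F = √Tr(AᴴA)`. -/
noncomputable def frobNorm {n : Type*} [Fintype n] (A : Matrix n n ℂ) : ℝ :=
  Real.sqrt (((Aᴴ * A).trace).re)

/-- The final operator applied by the `T`-query oracle algorithm with interleaved fixed
unitaries `W T, …, W 0` (queries act as `U ⊗ I` on the query register):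
`A^U = W T · (U ⊗ I) · W (T−1) · … · (U ⊗ I) · W 0`. -/
noncomputable def algOp {d k : Type*} [Fintype d] [DecidableEq d] [Fintype k] [DecidableEq k]
    (T : ℕ) (W : ℕ → Matrix (d × k) (d × k) ℂ) (U : Matrix d d ℂ) :
    Matrix (d × k) (d × k) ℂ :=
  W T * (List.ofFn (fun i : Fin T =>
    (U ⊗ₖ (1 : Matrix k k ℂ)) * W (T - 1 - (i : ℕ)))).prod

/-- The probability that the algorithm outputs `1`: the measurement `M` applied to the final
state `A^U |v⟩`. -/
noncomputable def algAcceptProb {d k : Type*} [Fintype d] [DecidableEq d]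
    [Fintype k] [DecidableEq k]
    (T : ℕ) (W : ℕ → Matrix (d × k) (d × k) ℂ) (v : d × k → ℂ)
    (M : Matrix (d × k) (d × k) ℂ) (U : Matrix d d ℂ) : ℝ :=
  (_root_.dotProduct (star ((algOp T W U).mulVec v))
    (M.mulVec ((algOp T W U).mulVec v))).re

/-! ### Auxiliary machinery -/

/-- The `ℓ²` packaging of a finitely supported vector. -/
noncomputable def en {n : Type*} [Fintype n] (w : n → ℂ) : EuclideanSpace ℂ n :=
  (WithLp.equiv 2 _).symm w

lemma en_inner {n : Type*} [Fintype n] (a b : n → ℂ) :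
    (inner ℂ (en a) (en b) : ℂ) = dotProduct (star a) b :=
  by rw [dotProduct_comm]; rfl

lemma en_norm_sq {n : Type*} [Fintype n] (a : n → ℂ) :
    ‖en a‖ ^ 2 = (dotProduct (star a) a).re := by
  have h := inner_self_eq_norm_sq (𝕜 := ℂ) (en a)
  rw [← en_inner, ← h]
  simp [RCLike.re_to_complex]

lemma en_sub {n : Type*} [Fintype n] (a b : n → ℂ) : en (a - b) = en a - en b := rfl
lemma en_add {n : Type*} [Fintype n] (a b : n → ℂ) : en (a + b) = en a + en b := rfl

lemma en_norm {n : Type*} [Fintype n] (a : n → ℂ) :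
    ‖en a‖ = Real.sqrt ((dotProduct (star a) a).re) := by
  rw [← en_norm_sq, Real.sqrt_sq (norm_nonneg _)]

lemma en_norm_sq_sum {n : Type*} [Fintype n] (u : n → ℂ) :
    ‖en u‖ ^ 2 = ∑ i, ‖u i‖ ^ 2 := by
  rw [EuclideanSpace.norm_eq, Real.sq_sqrt]
  · rfl
  · positivity

lemma re_dot_le {n : Type*} [Fintype n] (a b : n → ℂ) :
    (dotProduct (star a) b).re ≤ ‖en a‖ * ‖en b‖ := by
  calc (dotProduct (star a) b).re = (inner ℂ (en a) (en b) : ℂ).re := by rw [en_inner]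
    _ ≤ ‖(inner ℂ (en a) (en b) : ℂ)‖ := Complex.re_le_norm _
    _ ≤ ‖en a‖ * ‖en b‖ := norm_inner_le_norm _ _

lemma unitary_dot {n : Type*} [Fintype n] [DecidableEq n] {Wm : Matrix n n ℂ}
    (hWm : Wm ∈ Matrix.unitaryGroup n ℂ) (w : n → ℂ) :
    dotProduct (star (Wm.mulVec w)) (Wm.mulVec w) = dotProduct (star w) w := by
  rw [Matrix.star_mulVec, Matrix.dotProduct_mulVec, Matrix.vecMul_vecMul,
    ← Matrix.star_eq_conjTranspose, (Matrix.mem_unitaryGroup_iff'.mp hWm), Matrix.vecMul_one]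

lemma en_unitary {n : Type*} [Fintype n] [DecidableEq n] {Wm : Matrix n n ℂ}
    (hWm : Wm ∈ Matrix.unitaryGroup n ℂ) (w : n → ℂ) :
    ‖en (Wm.mulVec w)‖ = ‖en w‖ := by
  rw [en_norm, en_norm, unitary_dot hWm]

lemma kron_unitary {d k : Type*} [Fintype d] [DecidableEq d] [Fintype k] [DecidableEq k]
    {U : Matrix d d ℂ} (hU : U ∈ Matrix.unitaryGroup d ℂ) :
    (U ⊗ₖ (1 : Matrix k k ℂ)) ∈ Matrix.unitaryGroup (d × k) ℂ := by
  have hstar : star (U ⊗ₖ (1 : Matrix k k ℂ)) = (star U) ⊗ₖ (1 : Matrix k k ℂ) := by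
    ext ⟨i, c⟩ ⟨j, l⟩
    simp [Matrix.star_eq_conjTranspose, Matrix.conjTranspose_apply, Matrix.kronecker_apply,
      Matrix.one_apply, apply_ite, eq_comm]
    split <;> simp_all
  constructor
  · rw [hstar, ← Matrix.mul_kronecker_mul, one_mul,
      (Matrix.mem_unitaryGroup_iff'.mp hU), Matrix.one_kronecker_one]
  · rw [hstar, ← Matrix.mul_kronecker_mul, one_mul,
      (Matrix.mem_unitaryGroup_iff.mp hU), Matrix.one_kronecker_one]

lemma frob_tr {n : Type*} [Fintype n] (A : Matrix n n ℂ) :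
    ((Aᴴ * A).trace).re = ∑ i, ∑ j, ‖A i j‖ ^ 2 := by
  simp only [Matrix.trace, Matrix.diag, Matrix.mul_apply, Matrix.conjTranspose_apply]
  rw [Complex.re_sum]
  rw [Finset.sum_comm]
  congr 1; ext i
  rw [Complex.re_sum]
  congr 1; ext j
  rw [show star (A j i) = (starRingEnd ℂ) (A j i) from rfl, ← Complex.normSq_eq_conj_mul_self]
  simp [Complex.normSq_eq_norm_sq, ← Complex.ofReal_pow]

lemma frob_sq {n : Type*} [Fintype n] (A : Matrix n n ℂ) :
    frobNorm A ^ 2 = ∑ i, ∑ j, ‖A i j‖ ^ 2 := by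
  rw [frobNorm, Real.sq_sqrt, frob_tr]
  rw [frob_tr]; positivity

lemma frob_nonneg {n : Type*} [Fintype n] (A : Matrix n n ℂ) : 0 ≤ frobNorm A :=
  Real.sqrt_nonneg _

lemma kron_mulVec_apply {d k : Type*} [Fintype d] [DecidableEq d] [Fintype k] [DecidableEq k]
    (A : Matrix d d ℂ) (w : d × k → ℂ) (i : d) (c : k) :
    ((A ⊗ₖ (1 : Matrix k k ℂ)).mulVec w) (i, c) = ∑ j, A i j * w (j, c) := by
  rw [Matrix.mulVec, dotProduct]
  rw [Fintype.sum_prod_type]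
  simp only [Matrix.kronecker_apply, Matrix.one_apply, mul_ite, mul_one, mul_zero, ite_mul,
    zero_mul]
  refine Finset.sum_congr rfl fun j _ => ?_
  rw [Finset.sum_eq_single c] <;> simp_all [eq_comm]

/-- Operator bound of `A ⊗ I` on vectors via the Frobenius norm of `A`. -/
lemma kron_frob_bound {d k : Type*} [Fintype d] [DecidableEq d] [Fintype k] [DecidableEq k]
    (A : Matrix d d ℂ) (w : d × k → ℂ) :
    ‖en ((A ⊗ₖ (1 : Matrix k k ℂ)).mulVec w)‖ ≤ frobNorm A * ‖en w‖ := by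
  refine le_of_pow_le_pow_left₀ two_ne_zero
    (mul_nonneg (frob_nonneg A) (norm_nonneg _)) ?_
  rw [mul_pow, en_norm_sq_sum, en_norm_sq_sum, frob_sq]
  have hCS : ∀ (i : d) (c : k), ‖∑ j, A i j * w (j, c)‖ ^ 2 ≤
      (∑ j, ‖A i j‖ ^ 2) * (∑ j, ‖w (j, c)‖ ^ 2) := by
    intro i c
    have h1 : (inner ℂ (en (fun j => star (A i j))) (en (fun j => w (j, c))) : ℂ) =
        ∑ j, A i j * w (j, c) := by
      rw [en_inner]
      simp [dotProduct]
    have h2 := norm_inner_le_norm (𝕜 := ℂ) (en (fun j => star (A i j))) (en (fun j => w (j, c)))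
    rw [h1] at h2
    calc ‖∑ j, A i j * w (j, c)‖ ^ 2
        ≤ (‖en (fun j => star (A i j))‖ * ‖en (fun j => w (j, c))‖) ^ 2 := by
          exact pow_le_pow_left₀ (norm_nonneg _) h2 2
      _ = (∑ j, ‖A i j‖ ^ 2) * (∑ j, ‖w (j, c)‖ ^ 2) := by
          rw [mul_pow, en_norm_sq_sum, en_norm_sq_sum]
          simp [norm_star]
  calc ∑ p : d × k, ‖((A ⊗ₖ (1 : Matrix k k ℂ)).mulVec w) p‖ ^ 2
      = ∑ i, ∑ c, ‖∑ j, A i j * w (j, c)‖ ^ 2 := by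
        rw [Fintype.sum_prod_type]
        exact Finset.sum_congr rfl fun i _ => Finset.sum_congr rfl fun c _ => by
          rw [kron_mulVec_apply]
    _ ≤ ∑ i, ∑ c, (∑ j, ‖A i j‖ ^ 2) * (∑ j, ‖w (j, c)‖ ^ 2) := by
        refine Finset.sum_le_sum fun i _ => Finset.sum_le_sum fun c _ => hCS i c
    _ = (∑ i, ∑ j, ‖A i j‖ ^ 2) * ∑ p : d × k, ‖w p‖ ^ 2 := by
        rw [Fintype.sum_prod_type, Finset.sum_mul]
        refine Finset.sum_congr rfl fun i _ => ?_
        rw [← Finset.mul_sum]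
        congr 1
        rw [Finset.sum_comm]

lemma sub_kron {d k : Type*} [Fintype d] [DecidableEq d] [Fintype k] [DecidableEq k]
    (A B : Matrix d d ℂ) :
    (A - B) ⊗ₖ (1 : Matrix k k ℂ) = A ⊗ₖ (1 : Matrix k k ℂ) - B ⊗ₖ (1 : Matrix k k ℂ) := by
  ext ⟨i, c⟩ ⟨j, l⟩
  simp [Matrix.kronecker_apply, Matrix.sub_apply, sub_mul]

/-- The product of query and interleaving unitaries (without the final `W T`). -/
noncomputable def hybP {d k : Type*} [Fintype d] [DecidableEq d] [Fintype k] [DecidableEq k]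
    (T : ℕ) (W : ℕ → Matrix (d × k) (d × k) ℂ) (U : Matrix d d ℂ) :
    Matrix (d × k) (d × k) ℂ :=
  (List.ofFn (fun i : Fin T => (U ⊗ₖ (1 : Matrix k k ℂ)) * W (T - 1 - (i : ℕ)))).prod

lemma algOp_eq {d k : Type*} [Fintype d] [DecidableEq d] [Fintype k] [DecidableEq k]
    (T : ℕ) (W : ℕ → Matrix (d × k) (d × k) ℂ) (U : Matrix d d ℂ) :
    algOp T W U = W T * hybP T W U := rfl

lemma hybP_succ {d k : Type*} [Fintype d] [DecidableEq d] [Fintype k] [DecidableEq k]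
    (T : ℕ) (W : ℕ → Matrix (d × k) (d × k) ℂ) (U : Matrix d d ℂ) :
    hybP (T + 1) W U = (U ⊗ₖ (1 : Matrix k k ℂ)) * W T * hybP T W U := by
  rw [hybP, hybP, List.ofFn_succ, List.prod_cons, mul_assoc, mul_assoc]
  have h1 : (List.ofFn fun i : Fin T =>
      (U ⊗ₖ (1 : Matrix k k ℂ)) * W (T + 1 - 1 - ((Fin.succ i : Fin (T + 1)) : ℕ))) =
      (List.ofFn fun i : Fin T => (U ⊗ₖ (1 : Matrix k k ℂ)) * W (T - 1 - (i : ℕ))) := by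
    congr 1
    funext i
    have hv : ((Fin.succ i : Fin (T + 1)) : ℕ) = (i : ℕ) + 1 := rfl
    have harg : T + 1 - 1 - ((i : ℕ) + 1) = T - 1 - (i : ℕ) := by omega
    rw [hv, harg]
  rw [h1]
  norm_num

lemma hybP_mem {d k : Type*} [Fintype d] [DecidableEq d] [Fintype k] [DecidableEq k]
    (T : ℕ) (W : ℕ → Matrix (d × k) (d × k) ℂ)
    (hW : ∀ i < T, W i ∈ Matrix.unitaryGroup (d × k) ℂ)
    {U : Matrix d d ℂ} (hU : U ∈ Matrix.unitaryGroup d ℂ) :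
    hybP T W U ∈ Matrix.unitaryGroup (d × k) ℂ := by
  induction T with
  | zero =>
    rw [show hybP 0 W U = 1 by simp [hybP]]
    exact one_mem _
  | succ T ih =>
    rw [hybP_succ]
    exact mul_mem (mul_mem (kron_unitary hU) (hW T (Nat.lt_succ_self T)))
      (ih fun i hi => hW i (Nat.lt_succ_of_lt hi))

/-- The hybrid argument. -/
lemma hybrid {d k : Type*} [Fintype d] [DecidableEq d] [Fintype k] [DecidableEq k]
    (T : ℕ) (W : ℕ → Matrix (d × k) (d × k) ℂ)
    (hW : ∀ i < T, W i ∈ Matrix.unitaryGroup (d × k) ℂ)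
    {U V : Matrix d d ℂ}
    (hU : U ∈ Matrix.unitaryGroup d ℂ) (hV : V ∈ Matrix.unitaryGroup d ℂ)
    (w : d × k → ℂ) :
    ‖en ((hybP T W U - hybP T W V).mulVec w)‖ ≤ (T : ℝ) * frobNorm (U - V) * ‖en w‖ := by
  induction T generalizing w with
  | zero =>
    have : hybP 0 W U - hybP 0 W V = 0 := by simp [hybP]
    rw [this, Matrix.zero_mulVec]
    have h0 : en (0 : d × k → ℂ) = 0 := rfl
    rw [h0, norm_zero]
    norm_num
  | succ T ih =>
    have hW' : ∀ i < T, W i ∈ Matrix.unitaryGroup (d × k) ℂ :=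
      fun i hi => hW i (Nat.lt_succ_of_lt hi)
    have hsplit : hybP (T + 1) W U - hybP (T + 1) W V
        = (U ⊗ₖ (1 : Matrix k k ℂ)) * W T * (hybP T W U - hybP T W V)
          + ((U - V) ⊗ₖ (1 : Matrix k k ℂ)) * (W T * hybP T W V) := by
      rw [hybP_succ, hybP_succ, sub_kron]
      noncomm_ring
    rw [hsplit, Matrix.add_mulVec, en_add]
    refine (norm_add_le _ _).trans ?_
    have h1 : ‖en (((U ⊗ₖ (1 : Matrix k k ℂ)) * W T * (hybP T W U - hybP T W V)).mulVec w)‖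
        ≤ (T : ℝ) * frobNorm (U - V) * ‖en w‖ := by
      rw [← Matrix.mulVec_mulVec, ← Matrix.mulVec_mulVec]
      rw [en_unitary (kron_unitary hU), en_unitary (hW T (Nat.lt_succ_self T))]
      exact ih hW' w
    have h2 : ‖en ((((U - V) ⊗ₖ (1 : Matrix k k ℂ)) * (W T * hybP T W V)).mulVec w)‖
        ≤ frobNorm (U - V) * ‖en w‖ := by
      rw [← Matrix.mulVec_mulVec]
      refine (kron_frob_bound _ _).trans_eq ?_
      rw [en_unitary (mul_mem (hW T (Nat.lt_succ_self T)) (hybP_mem T W hW' hV))]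
    calc _ ≤ (T : ℝ) * frobNorm (U - V) * ‖en w‖ + frobNorm (U - V) * ‖en w‖ :=
          add_le_add h1 h2
      _ = ((T : ℕ) + 1 : ℝ) * frobNorm (U - V) * ‖en w‖ := by ring
      _ = ((T + 1 : ℕ) : ℝ) * frobNorm (U - V) * ‖en w‖ := by push_cast; ring

lemma psd_re_nonneg {n : Type*} [Fintype n] {X : Matrix n n ℂ} (hX : X.PosSemidef)
    (z : n → ℂ) : 0 ≤ (dotProduct (star z) (X.mulVec z)).re :=
  (Complex.le_def.mp (hX.dotProduct_mulVec_nonneg z)).1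

open scoped MatrixOrder in
/-- `M - M * M` is positive semidefinite for a measurement `0 ≤ M ≤ 1`. -/
lemma psd_M_sub_sq {n : Type*} [Fintype n] [DecidableEq n] {M : Matrix n n ℂ}
    (hM : M.PosSemidef) (hM1 : ((1 : Matrix n n ℂ) - M).PosSemidef) :
    (M - M * M).PosSemidef := by
  have hS : (CFC.sqrt M).PosSemidef := (CFC.sqrt_nonneg M).posSemidef
  have hSher : (CFC.sqrt M).conjTranspose = CFC.sqrt M := hS.1
  have h := hM1.mul_mul_conjTranspose_same (CFC.sqrt M)
  rw [hSher] at h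
  have heq : CFC.sqrt M * ((1 : Matrix n n ℂ) - M) * CFC.sqrt M = M - M * M := by
    have hSS : CFC.sqrt M * CFC.sqrt M = M := CFC.sqrt_mul_sqrt_self M hM.nonneg
    generalize hG : CFC.sqrt M = S at hSS ⊢
    rw [← hSS]
    noncomm_ring
  rwa [heq] at h

/-- The contraction `M + M - 1` for a measurement `0 ≤ M ≤ 1`. -/
lemma contraction {n : Type*} [Fintype n] [DecidableEq n] {M : Matrix n n ℂ}
    (hM : M.PosSemidef) (hM1 : ((1 : Matrix n n ℂ) - M).PosSemidef) (z : n → ℂ) :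
    ‖en ((M + M - 1).mulVec z)‖ ≤ ‖en z‖ := by
  set N : Matrix n n ℂ := M + M - 1 with hN
  have hNher : Nᴴ = N := by
    rw [hN]
    simp [Matrix.conjTranspose_sub, Matrix.conjTranspose_add, hM.1.eq]
  have hsq : (dotProduct (star (N.mulVec z)) (N.mulVec z))
      = dotProduct (star z) ((N * N).mulVec z) := by
    rw [Matrix.star_mulVec, Matrix.dotProduct_mulVec, Matrix.vecMul_vecMul, hNher,
      ← Matrix.dotProduct_mulVec]
  have hdecomp : (1 : Matrix n n ℂ) - N * N
      = (M - M * M) + (M - M * M) + ((M - M * M) + (M - M * M)) := by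
    rw [hN]; noncomm_ring
  have hpsd : ((1 : Matrix n n ℂ) - N * N).PosSemidef := by
    rw [hdecomp]
    exact ((psd_M_sub_sq hM hM1).add (psd_M_sub_sq hM hM1)).add
      ((psd_M_sub_sq hM hM1).add (psd_M_sub_sq hM hM1))
  have hle : (dotProduct (star z) ((N * N).mulVec z)).re
      ≤ (dotProduct (star z) z).re := by
    have h0 := psd_re_nonneg hpsd z
    have hexp : dotProduct (star z) (((1 : Matrix n n ℂ) - N * N).mulVec z)
        = dotProduct (star z) z - dotProduct (star z) ((N * N).mulVec z) := by
      rw [Matrix.sub_mulVec, dotProduct_sub, Matrix.one_mulVec]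
    rw [hexp] at h0
    simp only [Complex.sub_re] at h0
    linarith
  rw [en_norm, en_norm]
  exact Real.sqrt_le_sqrt (by rw [hsq]; exact hle)

/-- A quantum oracle algorithm making at most `T` queries to a unitary oracle `U` has
acceptance probability `f(U) := Pr[A^U → 1]` that is `T`-Lipschitz in the Frobenius norm:
`|f(U) − f(V)| ≤ T·‖U − V‖_F` for all unitaries `U, V`. -/
theorem stmt_18 {d k : Type*} [Fintype d] [DecidableEq d] [Fintype k] [DecidableEq k]
    (T : ℕ) (W : ℕ → Matrix (d × k) (d × k) ℂ)
    (hW : ∀ i ≤ T, W i ∈ Matrix.unitaryGroup (d × k) ℂ)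
    (v : d × k → ℂ) (hv : _root_.dotProduct (star v) v = 1)
    (M : Matrix (d × k) (d × k) ℂ) (hM : M.PosSemidef)
    (hM1 : ((1 : Matrix (d × k) (d × k) ℂ) - M).PosSemidef)
    (U V : Matrix d d ℂ)
    (hU : U ∈ Matrix.unitaryGroup d ℂ) (hV : V ∈ Matrix.unitaryGroup d ℂ) :
    |algAcceptProb T W v M U - algAcceptProb T W v M V| ≤ (T : ℝ) * frobNorm (U - V) := by
  have hW' : ∀ i < T, W i ∈ Matrix.unitaryGroup (d × k) ℂ := fun i hi => hW i (le_of_lt hi)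
  set x : d × k → ℂ := (algOp T W U).mulVec v with hx
  set y : d × k → ℂ := (algOp T W V).mulVec v with hy
  have hxu : (algOp T W U) ∈ Matrix.unitaryGroup (d × k) ℂ := by
    rw [algOp_eq]
    exact mul_mem (hW T le_rfl) (hybP_mem T W hW' hU)
  have hyu : (algOp T W V) ∈ Matrix.unitaryGroup (d × k) ℂ := by
    rw [algOp_eq]
    exact mul_mem (hW T le_rfl) (hybP_mem T W hW' hV)
  have hx1 : dotProduct (star x) x = 1 := by rw [hx, unitary_dot hxu, hv]
  have hy1 : dotProduct (star y) y = 1 := by rw [hy, unitary_dot hyu, hv]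
  have hnx : ‖en x‖ = 1 := by rw [en_norm, hx1]; simp
  have hny : ‖en y‖ = 1 := by rw [en_norm, hy1]; simp
  have hnv : ‖en v‖ = 1 := by rw [en_norm, hv]; simp
  -- hybrid bound on ‖x - y‖
  have hxy : ‖en (x - y)‖ ≤ (T : ℝ) * frobNorm (U - V) := by
    have hdiff : x - y = (W T).mulVec ((hybP T W U - hybP T W V).mulVec v) := by
      rw [hx, hy, algOp_eq, algOp_eq, ← Matrix.mulVec_mulVec, ← Matrix.mulVec_mulVec,
        ← Matrix.mulVec_sub, Matrix.sub_mulVec]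
    rw [hdiff, en_unitary (hW T le_rfl)]
    calc ‖en ((hybP T W U - hybP T W V).mulVec v)‖
        ≤ (T : ℝ) * frobNorm (U - V) * ‖en v‖ := hybrid T W hW' hU hV v
      _ = (T : ℝ) * frobNorm (U - V) := by rw [hnv, mul_one]
  set N : Matrix (d × k) (d × k) ℂ := M + M - 1 with hNdef
  -- key algebraic identity
  have hkey : algAcceptProb T W v M U - algAcceptProb T W v M V
      = (1 / 4) * ((dotProduct (star (x - y)) (N.mulVec (x + y))).re
        + (dotProduct (star (x + y)) (N.mulVec (x - y))).re) := by
    have hNx : ∀ z : d × k → ℂ, dotProduct (star z) (N.mulVec z)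
        = dotProduct (star z) (M.mulVec z) + dotProduct (star z) (M.mulVec z)
          - dotProduct (star z) z := by
      intro z
      rw [hNdef, Matrix.sub_mulVec, Matrix.add_mulVec, Matrix.one_mulVec,
        dotProduct_sub, dotProduct_add]
    have hC : dotProduct (star (x - y)) (N.mulVec (x + y))
        + dotProduct (star (x + y)) (N.mulVec (x - y))
        = 2 * (dotProduct (star x) (N.mulVec x)
          - dotProduct (star y) (N.mulVec y)) := by
      simp only [Matrix.mulVec_add, Matrix.mulVec_sub, star_sub, star_add,
        dotProduct_add, dotProduct_sub, sub_dotProduct,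
        add_dotProduct]
      ring
    have hre := congrArg Complex.re hC
    simp only [Complex.add_re, Complex.mul_re, Complex.sub_re] at hre
    have hNxre := congrArg Complex.re (hNx x)
    have hNyre := congrArg Complex.re (hNx y)
    have hx1re : (dotProduct (star x) x).re = 1 := by rw [hx1]; simp
    have hy1re : (dotProduct (star y) y).re = 1 := by rw [hy1]; simp
    simp only [Complex.sub_re, Complex.add_re] at hNxre hNyre
    rw [algAcceptProb, algAcceptProb, ← hx, ← hy]
    rw [hx1re] at hNxre
    rw [hy1re] at hNyre
    have h2 : (2 : ℂ).re = 2 := by norm_num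
    have h2i : (2 : ℂ).im = 0 := by norm_num
    rw [h2, h2i] at hre
    linarith [hre, hNxre, hNyre]
  -- bounds
  have ha := abs_nonneg (algAcceptProb T W v M U - algAcceptProb T W v M V)
  have hb1 : |(dotProduct (star (x - y)) (N.mulVec (x + y))).re|
      ≤ ‖en (x - y)‖ * ‖en (x + y)‖ := by
    have := re_dot_le (x - y) (N.mulVec (x + y))
    have hneg := re_dot_le (x - y) (-(N.mulVec (x + y)))
    have hcontr := contraction hM hM1 (x + y)
    have hb : ‖en (N.mulVec (x + y))‖ ≤ ‖en (x + y)‖ := hcontr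
    have habs : |(dotProduct (star (x - y)) (N.mulVec (x + y))).re|
        ≤ ‖en (x - y)‖ * ‖en (N.mulVec (x + y))‖ := by
      rcases abs_cases ((dotProduct (star (x - y)) (N.mulVec (x + y))).re) with
        ⟨heq, _⟩ | ⟨heq, _⟩
      · rw [heq]; exact this
      · rw [heq]
        have : dotProduct (star (x - y)) (-(N.mulVec (x + y)))
            = -(dotProduct (star (x - y)) (N.mulVec (x + y))) := by
          rw [dotProduct_neg]
        rw [this] at hneg
        have henneg : en (-(N.mulVec (x + y))) = -(en (N.mulVec (x + y))) := rfl
        rw [Complex.neg_re] at hneg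
        rw [henneg, norm_neg] at hneg
        exact hneg
    exact habs.trans (mul_le_mul_of_nonneg_left hb (norm_nonneg _))
  have hb2 : |(dotProduct (star (x + y)) (N.mulVec (x - y))).re|
      ≤ ‖en (x + y)‖ * ‖en (x - y)‖ := by
    have := re_dot_le (x + y) (N.mulVec (x - y))
    have hneg := re_dot_le (x + y) (-(N.mulVec (x - y)))
    have hb : ‖en (N.mulVec (x - y))‖ ≤ ‖en (x - y)‖ := contraction hM hM1 (x - y)
    have habs : |(dotProduct (star (x + y)) (N.mulVec (x - y))).re|
        ≤ ‖en (x + y)‖ * ‖en (N.mulVec (x - y))‖ := by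
      rcases abs_cases ((dotProduct (star (x + y)) (N.mulVec (x - y))).re) with
        ⟨heq, _⟩ | ⟨heq, _⟩
      · rw [heq]; exact this
      · rw [heq]
        have h3 : dotProduct (star (x + y)) (-(N.mulVec (x - y)))
            = -(dotProduct (star (x + y)) (N.mulVec (x - y))) := by
          rw [dotProduct_neg]
        rw [h3] at hneg
        have henneg : en (-(N.mulVec (x - y))) = -(en (N.mulVec (x - y))) := rfl
        rw [Complex.neg_re] at hneg
        rw [henneg, norm_neg] at hneg
        exact hneg
    exact habs.trans (mul_le_mul_of_nonneg_left hb (norm_nonneg _))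
  have hsum : ‖en (x + y)‖ ≤ 2 := by
    rw [en_add]
    calc ‖en x + en y‖ ≤ ‖en x‖ + ‖en y‖ := norm_add_le _ _
      _ = 2 := by rw [hnx, hny]; norm_num
  have hdn : (0 : ℝ) ≤ ‖en (x - y)‖ := norm_nonneg _
  have hsn : (0 : ℝ) ≤ ‖en (x + y)‖ := norm_nonneg _
  have hTf : (0 : ℝ) ≤ (T : ℝ) * frobNorm (U - V) :=
    mul_nonneg (Nat.cast_nonneg T) (frob_nonneg _)
  rw [hkey]
  rw [abs_mul]
  have h14 : |(1 / 4 : ℝ)| = 1 / 4 := by norm_num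
  rw [h14]
  calc (1 / 4 : ℝ) * |(dotProduct (star (x - y)) (N.mulVec (x + y))).re
        + (dotProduct (star (x + y)) (N.mulVec (x - y))).re|
      ≤ (1 / 4) * (|(dotProduct (star (x - y)) (N.mulVec (x + y))).re|
        + |(dotProduct (star (x + y)) (N.mulVec (x - y))).re|) := by
        have := abs_add_le ((dotProduct (star (x - y)) (N.mulVec (x + y))).re)
          ((dotProduct (star (x + y)) (N.mulVec (x - y))).re)
        linarith
    _ ≤ (1 / 4) * (‖en (x - y)‖ * ‖en (x + y)‖ + ‖en (x + y)‖ * ‖en (x - y)‖) := by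
        linarith
    _ = (1 / 2) * (‖en (x - y)‖ * ‖en (x + y)‖) := by ring
    _ ≤ (1 / 2) * (((T : ℝ) * frobNorm (U - V)) * 2) := by
        have := mul_le_mul hxy hsum hsn hTf
        linarith
    _ = (T : ℝ) * frobNorm (U - V) := by ring
end
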